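/- arXiv:2303.15895 — 4 statements merged into one kernel-verified Lean document; each statement's English description precedes it below -/
import Mathlib

section
/- Define p̄(0) = 1 and p̄(n) = 0 for every integer n < 0. Then for every integer n ≥ 1 the overpartition function satisfies the recurrence p̄(n) = 2·∑_{k=1}^{∞} (−1)^{k+1} p̄(n − k²) (the sum is finite since p̄ vanishes on negative arguments; it may be taken over 1 ≤ k ≤ ⌊√n⌋). -/
/-- The overpartition function: `p̄(n) = ∑_{k=0}^{n} d(k) * p(n-k)`, where `d(k)` is the
number of partitions of `k` into distinct parts and `p(m)` is the number of partitions. -/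
noncomputable def overpartition (n : ℕ) : ℕ :=
  ∑ k ∈ Finset.range (n + 1),
    (Nat.Partition.distincts k).card * Fintype.card (Nat.Partition (n - k))

/-- Extension of the overpartition function to `ℤ`, with `p̄(m) = 0` for `m < 0`. -/
noncomputable def pbarZ (m : ℤ) : ℤ :=
  if m < 0 then 0 else overpartition m.toNat


open PowerSeries Finset

namespace OverpartitionAux

noncomputable section

open scoped Classical

variable {α : Type*}

/-- The partial product for the generating function for distinct partitions.
TODO: As `m` tends to infinity, this converges (in the `X`-adic topology).

If `m` is sufficiently large, the `i`th coefficient gives the number of distinct partitions of the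
natural number `i`: proved in `distinctGF_prop`.
It is stated for an arbitrary commutative semiring `α`, though it usually suffices to use `ℕ`, `ℚ`
or `ℝ`.
-/
def partialDistinctGF (m : ℕ) [CommSemiring α] :=
  ∏ i ∈ range m, (1 + (X : PowerSeries α) ^ (i + 1))


/-- A convenience constructor for the power series whose coefficients indicate a subset. -/
def indicatorSeries (α : Type*) [Semiring α] (s : Set ℕ) : PowerSeries α :=
  PowerSeries.mk fun n => if n ∈ s then 1 else 0

theorem coeff_indicator (s : Set ℕ) [Semiring α] (n : ℕ) :
    coeff (R := α) n (indicatorSeries _ s) = if n ∈ s then 1 else 0 :=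
  coeff_mk _ _

theorem coeff_indicator_pos (s : Set ℕ) [Semiring α] (n : ℕ) (h : n ∈ s) :
    coeff (R := α) n (indicatorSeries _ s) = 1 := by rw [coeff_indicator, if_pos h]

theorem coeff_indicator_neg (s : Set ℕ) [Semiring α] (n : ℕ) (h : n ∉ s) :
    coeff (R := α) n (indicatorSeries _ s) = 0 := by rw [coeff_indicator, if_neg h]

theorem constantCoeff_indicator (s : Set ℕ) [Semiring α] :
    constantCoeff (R := α) (indicatorSeries _ s) = if 0 ∈ s then 1 else 0 :=
  rfl

theorem two_series (i : ℕ) [Semiring α] :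
    1 + (X : PowerSeries α) ^ i.succ = indicatorSeries α {0, i.succ} := by
  ext n
  simp only [coeff_indicator, coeff_one, coeff_X_pow, Set.mem_insert_iff, Set.mem_singleton_iff,
    map_add]
  cases' n with d
  · simp [(Nat.succ_ne_zero i).symm]
  · simp [Nat.succ_ne_zero d]

theorem num_series' [Field α] (i : ℕ) :
    (1 - (X : PowerSeries α) ^ (i + 1))⁻¹ = indicatorSeries α {k | i + 1 ∣ k} := by
  rw [PowerSeries.inv_eq_iff_mul_eq_one]
  · ext n
    cases n with
    | zero => simp [mul_sub, zero_pow, constantCoeff_indicator]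
    | succ n =>
      simp only [coeff_one, if_false, mul_sub, mul_one, coeff_indicator,
        LinearMap.map_sub, reduceCtorEq]
      simp_rw [coeff_mul, coeff_X_pow, coeff_indicator, @boole_mul _ _ _ _]
      erw [@sum_ite _ _ _ _ _ (fun _ => Classical.propDecidable _), sum_ite]
      simp_rw [@filter_filter _ _ _ _ _, sum_const_zero, add_zero, sum_const, nsmul_eq_mul, mul_one,
        sub_eq_iff_eq_add, zero_add]
      symm
      split_ifs with h
      · suffices #{a ∈ antidiagonal (n + 1) | i + 1 ∣ a.fst ∧ a.snd = i + 1} = 1 by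
          simp only [Set.mem_setOf_eq]; convert congr_arg ((↑) : ℕ → α) this; norm_cast
        rw [card_eq_one]
        cases' h with p hp
        refine ⟨((i + 1) * (p - 1), i + 1), ?_⟩
        ext ⟨a₁, a₂⟩
        simp only [mem_filter, Prod.mk_inj, HasAntidiagonal.mem_antidiagonal, mem_singleton]
        constructor
        · rintro ⟨a_left, ⟨a, rfl⟩, rfl⟩
          refine ⟨?_, rfl⟩
          rw [Nat.mul_sub_left_distrib, ← hp, ← a_left, mul_one, Nat.add_sub_cancel]
        · rintro ⟨rfl, rfl⟩
          match p with
          | 0 => rw [mul_zero] at hp; cases hp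
          | p + 1 => rw [hp]; simp [mul_add]
      · suffices #{a ∈ antidiagonal (n + 1) | i + 1 ∣ a.fst ∧ a.snd = i + 1} = 0 by
          simp only [Set.mem_setOf_eq]; convert congr_arg ((↑) : ℕ → α) this; norm_cast
        rw [card_eq_zero]
        apply eq_empty_of_forall_notMem
        simp only [Prod.forall, mem_filter, not_and, HasAntidiagonal.mem_antidiagonal]
        rintro _ h₁ h₂ ⟨a, rfl⟩ rfl
        apply h
        simp [← h₂]
  · simp [zero_pow]

def mkOdd : ℕ ↪ ℕ :=
  ⟨fun i => 2 * i + 1, fun x y h => by linarith⟩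

theorem partialGF_prop (α : Type*) [CommSemiring α] (n : ℕ) (s : Finset ℕ) (hs : ∀ i ∈ s, 0 < i)
    (c : ℕ → Set ℕ) (hc : ∀ i, i ∉ s → 0 ∈ c i) :
    #{p : n.Partition | (∀ j, p.parts.count j ∈ c j) ∧ ∀ j ∈ p.parts, j ∈ s} =
      coeff (R := α) n (∏ i ∈ s, indicatorSeries α ((· * i) '' c i)) := by
  simp_rw [coeff_prod, coeff_indicator, prod_boole, sum_boole]
  apply congr_arg
  simp only [mem_univ, forall_true_left, not_and, not_forall, exists_prop,
    Set.mem_image, not_exists]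
  set φ : (a : Nat.Partition n) →
    a ∈ filter (fun p ↦ (∀ (j : ℕ), Multiset.count j p.parts ∈ c j) ∧ ∀ j ∈ p.parts, j ∈ s) univ →
    ℕ →₀ ℕ := fun p _ => {
      toFun := fun i => Multiset.count i p.parts • i
      support := Finset.filter (fun i => i ≠ 0) p.parts.toFinset
      mem_support_toFun := fun a => by
        simp only [smul_eq_mul, ne_eq, mul_eq_zero, Multiset.count_eq_zero]
        rw [not_or, not_not]
        simp only [Multiset.mem_toFinset, not_not, mem_filter] }
  refine Finset.card_bij φ ?_ ?_ ?_
  · intro a ha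
    simp only [φ, not_forall, not_exists, not_and, exists_prop, mem_filter]
    rw [mem_finsuppAntidiag]
    dsimp only [ne_eq, smul_eq_mul, id_eq, eq_mpr_eq_cast, le_eq_subset, Finsupp.coe_mk]
    simp only [mem_univ, forall_true_left, not_and, not_forall, exists_prop,
      mem_filter, true_and] at ha
    refine ⟨⟨?_, fun i ↦ ?_⟩, fun i _ ↦ ⟨a.parts.count i, ha.1 i, rfl⟩⟩
    · conv_rhs => simp [← a.parts_sum]
      rw [sum_multiset_count_of_subset _ s]
      · simp only [smul_eq_mul]
      · intro i
        simp only [Multiset.mem_toFinset, not_not, mem_filter]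
        apply ha.2
    · simp only [ne_eq, Multiset.mem_toFinset, not_not, mem_filter, and_imp]
      exact fun hi _ ↦ ha.2 i hi
  · intro p₁ hp₁ p₂ hp₂ h
    apply Nat.Partition.ext
    simp only [true_and, mem_univ, mem_filter] at hp₁ hp₂
    ext i
    simp only [φ, ne_eq, Multiset.mem_toFinset, not_not, smul_eq_mul, Finsupp.mk.injEq] at h
    by_cases hi : i = 0
    · rw [hi]
      rw [Multiset.count_eq_zero_of_notMem]
      · rw [Multiset.count_eq_zero_of_notMem]
        intro a; exact Nat.lt_irrefl 0 (hs 0 (hp₂.2 0 a))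
      intro a; exact Nat.lt_irrefl 0 (hs 0 (hp₁.2 0 a))
    · rw [← mul_left_inj' hi]
      rw [funext_iff] at h
      exact h.2 i
  · simp only [φ, mem_filter, mem_finsuppAntidiag, mem_univ, exists_prop, true_and, and_assoc]
    rintro f ⟨hf, hf₃, hf₄⟩
    have hf' : f ∈ finsuppAntidiag s n := mem_finsuppAntidiag.mpr ⟨hf, hf₃⟩
    simp only [mem_finsuppAntidiag] at hf'
    refine ⟨⟨∑ i ∈ s, Multiset.replicate (f i / i) i, ?_, ?_⟩, ?_, ?_, ?_⟩
    · intro i hi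
      simp only [exists_prop, Multiset.mem_sum, mem_map, Function.Embedding.coeFn_mk] at hi
      rcases hi with ⟨t, ht, z⟩
      apply hs
      rwa [Multiset.eq_of_mem_replicate z]
    · simp_rw [Multiset.sum_sum, Multiset.sum_replicate, Nat.nsmul_eq_mul]
      rw [← hf'.1]
      refine sum_congr rfl fun i hi => Nat.div_mul_cancel ?_
      rcases hf₄ i hi with ⟨w, _, hw₂⟩
      rw [← hw₂]
      exact dvd_mul_left _ _
    · intro i
      simp_rw [Multiset.count_sum', Multiset.count_replicate, sum_ite_eq']
      split_ifs with h
      · rcases hf₄ i h with ⟨w, hw₁, hw₂⟩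
        rwa [← hw₂, Nat.mul_div_cancel _ (hs i h)]
      · exact hc _ h
    · intro i hi
      rw [Multiset.mem_sum] at hi
      rcases hi with ⟨j, hj₁, hj₂⟩
      rwa [Multiset.eq_of_mem_replicate hj₂]
    · ext i
      simp_rw [Multiset.count_sum', Multiset.count_replicate, sum_ite_eq']
      simp only [ne_eq, Multiset.mem_toFinset, not_not, smul_eq_mul, ite_mul,
        zero_mul, Finsupp.coe_mk]
      split_ifs with h
      · apply Nat.div_mul_cancel
        rcases hf₄ i h with ⟨w, _, hw₂⟩
        apply Dvd.intro_left _ hw₂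
      · apply symm
        rw [← Finsupp.notMem_support_iff]
        exact notMem_mono hf'.2 h

theorem partialDistinctGF_prop [CommSemiring α] (n m : ℕ) :
    #{p : n.Partition |
        p.parts.Nodup ∧ ∀ j ∈ p.parts, j ∈ (range m).map ⟨Nat.succ, Nat.succ_injective⟩} =
      coeff (R := α) n (partialDistinctGF m) := by
  rw [partialDistinctGF]
  convert partialGF_prop α n
    ((range m).map ⟨Nat.succ, Nat.succ_injective⟩) _ (fun _ => {0, 1}) (fun _ _ => Or.inl rfl)
    using 2
  · congr! with p
    rw [Multiset.nodup_iff_count_le_one]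
    congr! 1 with i
    rcases Multiset.count i p.parts with (_ | _ | ms) <;> simp
  · simp_rw [Finset.prod_map, two_series]
    congr with i
    simp [Set.image_pair]
  · simp only [mem_map, Function.Embedding.coeFn_mk]
    rintro i ⟨_, _, rfl⟩
    apply Nat.succ_pos

theorem distinctGF_prop [CommSemiring α] (n m : ℕ) (h : n < m + 1) :
    #(Nat.Partition.distincts n) = coeff (R := α) n (partialDistinctGF m) := by
  rw [← partialDistinctGF_prop, Nat.Partition.distincts]
  congr with p
  apply (and_iff_left _).symm
  intro i hi
  have : i ≤ n := by
    simpa [p.parts_sum] using Multiset.single_le_sum (fun _ _ => Nat.zero_le _) _ hi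
  simp only [mkOdd, exists_prop, mem_range, Function.Embedding.coeFn_mk, mem_map]
  refine ⟨i - 1, ?_, Nat.succ_pred_eq_of_pos (p.parts_pos hi)⟩
  rw [tsub_lt_iff_right (Nat.one_le_iff_ne_zero.mpr (p.parts_pos hi).ne')]
  exact lt_of_le_of_lt this h



/-- `(q²;q²)_r` -/
def Fe (r : ℕ) : PowerSeries ℚ := ∏ i ∈ range r, (1 - X ^ (2 * (i + 1)))
/-- `(q;q²)_r` -/
def Go (r : ℕ) : PowerSeries ℚ := ∏ i ∈ range r, (1 - X ^ (2 * i + 1))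
/-- `(q;q)_r` -/
def Qp (r : ℕ) : PowerSeries ℚ := ∏ i ∈ range r, (1 - X ^ (i + 1))
def Pd (r : ℕ) : PowerSeries ℚ := ∏ i ∈ range r, (1 + X ^ (i + 1))
def Pp (r : ℕ) : PowerSeries ℚ := ∏ i ∈ range r, (1 - X ^ (i + 1))⁻¹

/-- Gaussian binomial `[n choose j]` in base `q²`, as a power series over ℚ. -/
def gb2 : ℕ → ℕ → PowerSeries ℚ
  | 0, 0 => 1
  | 0, _ + 1 => 0
  | _ + 1, 0 => 1
  | n + 1, j + 1 => gb2 n j + X ^ (2 * (j + 1)) * gb2 n (j + 1)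

theorem gb2_zero_right (n : ℕ) : gb2 n 0 = 1 := by cases n <;> rfl

theorem gb2_eq_zero : ∀ {n j : ℕ}, n < j → gb2 n j = 0
  | 0, j + 1, _ => rfl
  | n + 1, j + 1, h => by
      rw [gb2, gb2_eq_zero (by omega), gb2_eq_zero (by omega), mul_zero, add_zero]

theorem gb2_self : ∀ n : ℕ, gb2 n n = 1
  | 0 => rfl
  | n + 1 => by
      rw [gb2, gb2_self n, gb2_eq_zero (Nat.lt_succ_self n), mul_zero, add_zero]

/-- Homogeneous finite `q`-binomial (Cauchy) theorem, base `q²`. -/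
theorem cauchy (n : ℕ) (x y : PowerSeries ℚ) :
    ∑ j ∈ range (n + 1), (-1) ^ j * X ^ (j * (j - 1)) * gb2 n j * x ^ (n - j) * y ^ j =
      ∏ i ∈ range n, (x - X ^ (2 * i) * y) := by
  induction n generalizing y with
  | zero => simp [gb2]
  | succ n ih =>
    have hprod : ∏ i ∈ range (n + 1), (x - X ^ (2 * i) * y) =
        (∏ i ∈ range n, (x - X ^ (2 * i) * (X ^ 2 * y))) * (x - y) := by
      rw [prod_range_succ' (fun i => x - X ^ (2 * i) * y)]
      congr 1
      · refine prod_congr rfl fun i _ => ?_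
        rw [← mul_assoc, ← pow_add]
        ring_nf
      · simp
    rw [hprod, ← ih (X ^ 2 * y)]
    set S : ℕ → PowerSeries ℚ :=
      fun j => (-1) ^ j * X ^ (j * (j - 1)) * gb2 n j * x ^ (n - j) * (X ^ 2 * y) ^ j with hS
    rw [mul_sub]
    -- LHS: split off the j = 0 term, reindex the rest
    rw [sum_range_succ' (fun j => (-1) ^ j * X ^ (j * (j - 1)) * gb2 (n + 1) j * x ^ (n + 1 - j) * y ^ j)]
    have hj0 : (-1 : PowerSeries ℚ) ^ 0 * X ^ (0 * (0 - 1)) * gb2 (n + 1) 0 * x ^ (n + 1 - 0) * y ^ 0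
        = x ^ (n + 1) := by
      simp [gb2_zero_right]
    rw [hj0]
    have hsplit : ∀ i ∈ range (n + 1),
        (-1) ^ (i + 1) * X ^ ((i + 1) * (i + 1 - 1)) * gb2 (n + 1) (i + 1) * x ^ (n + 1 - (i + 1)) *
            y ^ (i + 1) =
          (-(S i * y))
            + (-1) ^ (i + 1) * (X ^ (i * (i - 1)) * X ^ (2 * i)) * (X ^ (2 * (i + 1)) * gb2 n (i + 1)) *
              x ^ (n - i) * y ^ (i + 1) := by
      intro i hi
      rw [gb2]
      have h1 : n + 1 - (i + 1) = n - i := by omega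
      rw [h1]
      have h2 : (i + 1) * (i + 1 - 1) = i * (i - 1) + 2 * i := by
        cases i with
        | zero => simp
        | succ k => simp only [Nat.add_sub_cancel]; ring
      rw [h2, pow_add, hS]
      simp only [mul_pow, ← pow_mul]
      ring
    rw [sum_congr rfl hsplit, sum_add_distrib]
    have hA : ∑ i ∈ range (n + 1), (-(S i * y)) = -((∑ j ∈ range (n + 1), S j) * y) := by
      rw [sum_mul, ← Finset.sum_neg_distrib]
    have hB : ∑ i ∈ range (n + 1),
        (-1) ^ (i + 1) * (X ^ (i * (i - 1)) * X ^ (2 * i)) * (X ^ (2 * (i + 1)) * gb2 n (i + 1)) *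
          x ^ (n - i) * y ^ (i + 1) =
        (∑ j ∈ range (n + 1), S j) * x - x ^ (n + 1) := by
      have hSn : S (n + 1) = 0 := by
        rw [hS]; simp [gb2_eq_zero (Nat.lt_succ_self n)]
      have hext : (∑ j ∈ range (n + 1), S j) * x = ∑ j ∈ range (n + 1 + 1), S j * x := by
        rw [sum_range_succ (fun j => S j * x) (n + 1), hSn, zero_mul, add_zero, sum_mul]
      rw [hext, sum_range_succ' (fun j => S j * x)]
      have hz : S 0 * x = x ^ (n + 1) := by
        rw [hS]; simp [gb2_zero_right, pow_succ, mul_comm]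
      rw [hz, add_sub_cancel_right]
      refine sum_congr rfl fun i hi => ?_
      rw [hS]
      dsimp only
      simp only [mem_range] at hi
      have h1 : n - (i + 1) + 1 = n - i ∨ n < i + 1 := by omega
      have h2 : (i + 1) * (i + 1 - 1) = i * (i - 1) + 2 * i := by
        cases i with
        | zero => simp
        | succ k => simp only [Nat.add_sub_cancel]; ring
      rcases h1 with h1 | h1
      · have hx : x ^ (n - i) = x ^ (n - (i + 1)) * x := by rw [← pow_succ, h1]
        rw [h2, pow_add, hx]
        simp only [mul_pow, ← pow_mul]
        ring
      · rw [gb2_eq_zero h1]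
        ring
    rw [hA, hB]
    ring

theorem prodEval (m : ℕ) (hm : 1 ≤ m) :
    ∏ i ∈ range (2 * m), ((X : PowerSeries ℚ) ^ (2 * m - 1) - X ^ (2 * i) * 1) =
      (-1) ^ m * X ^ (3 * m * m - 2 * m) * (Go m * Go m) := by
  rw [two_mul, prod_range_add]
  have h1 : ∏ i ∈ range m, ((X : PowerSeries ℚ) ^ (2 * m - 1) - X ^ (2 * i) * 1) =
      (-1) ^ m * X ^ (m * (m - 1)) * Go m := by
    have hc : ∀ i ∈ range m, ((X : PowerSeries ℚ) ^ (2 * m - 1) - X ^ (2 * i) * 1) =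
        (-1) * (X ^ (2 * i) * (1 - X ^ (2 * (m - 1 - i) + 1))) := by
      intro i hi
      simp only [mem_range] at hi
      have he : 2 * i + (2 * (m - 1 - i) + 1) = 2 * m - 1 := by omega
      rw [mul_sub, mul_one, ← pow_add, he]
      ring
    rw [prod_congr rfl hc, prod_mul_distrib, prod_mul_distrib]
    rw [prod_const, prod_pow_eq_pow_sum]
    have hrefl : ∏ i ∈ range m, (1 - (X : PowerSeries ℚ) ^ (2 * (m - 1 - i) + 1)) = Go m := by
      rw [Go, ← prod_range_reflect (fun i => 1 - (X : PowerSeries ℚ) ^ (2 * i + 1)) m]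
    have hsum : ∑ i ∈ range m, 2 * i = m * (m - 1) := by
      rw [← mul_sum, mul_comm, Finset.sum_range_id_mul_two]
    rw [hrefl, hsum, card_range]
    ring
  have h2 : ∏ i ∈ range m, ((X : PowerSeries ℚ) ^ (2 * m - 1) - X ^ (2 * (m + i)) * 1) =
      X ^ ((2 * m - 1) * m) * Go m := by
    have hc : ∀ i ∈ range m, ((X : PowerSeries ℚ) ^ (2 * m - 1) - X ^ (2 * (m + i)) * 1) =
        X ^ (2 * m - 1) * (1 - X ^ (2 * i + 1)) := by
      intro i hi
      have he : 2 * m - 1 + (2 * i + 1) = 2 * (m + i) := by omega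
      rw [mul_sub, mul_one, mul_one, ← pow_add, he]
    rw [prod_congr rfl hc, prod_mul_distrib, prod_const, ← pow_mul, Go, card_range]
  rw [two_mul] at h1 h2
  rw [h1, h2]
  have he2 : m * (m - 1) + (m + m - 1) * m = 3 * m * m - (m + m) := by
    obtain ⟨k, rfl⟩ : ∃ k, m = k + 1 := ⟨m - 1, by omega⟩
    apply (Nat.sub_eq_of_eq_add ?_).symm
    have h3 : k + 1 + (k + 1) - 1 = k + k + 1 := by omega
    simp only [Nat.add_sub_cancel, h3]
    ring
  rw [show ((-1 : PowerSeries ℚ) ^ m * X ^ (m * (m - 1)) * Go m) * (X ^ ((m + m - 1) * m) * Go m)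
      = (-1) ^ m * (X ^ (m * (m - 1)) * X ^ ((m + m - 1) * m)) * (Go m * Go m) from by ring,
    ← pow_add, he2]

theorem lemmaA (m : ℕ) (hm : 1 ≤ m) :
    ∑ j ∈ range (2 * m + 1), (-1) ^ (m + j) * X ^ (((j : ℤ) - m).natAbs ^ 2) * gb2 (2 * m) j
      = Go m * Go m := by
  have hc := cauchy (2 * m) (X ^ (2 * m - 1)) 1
  rw [prodEval m hm] at hc
  have key : ∑ j ∈ range (2 * m + 1),
      (-1) ^ j * X ^ (j * (j - 1)) * gb2 (2 * m) j * (X ^ (2 * m - 1)) ^ (2 * m - j) * 1 ^ j =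
      ((-1) ^ m * X ^ (3 * m * m - 2 * m)) *
        ∑ j ∈ range (2 * m + 1), (-1) ^ (m + j) * X ^ (((j:ℤ) - m).natAbs ^ 2) * gb2 (2 * m) j := by
    rw [mul_sum]
    refine sum_congr rfl fun j hj => ?_
    simp only [mem_range] at hj
    have hsign : ((-1 : PowerSeries ℚ) ^ m) * (-1) ^ (m + j) = (-1) ^ j := by
      rw [← pow_add, show m + (m + j) = 2 * m + j by ring, pow_add, pow_mul]
      norm_num
    have h1 : ((3 * m * m - 2 * m : ℕ) : ℤ) = 3 * m * m - 2 * m := by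
      have : 2 * m ≤ 3 * m * m := by nlinarith
      push_cast [Nat.cast_sub this]; ring
    have h2 : ((((j:ℤ) - m).natAbs ^ 2 : ℕ) : ℤ) = ((j:ℤ) - m) ^ 2 := by
      exact_mod_cast Int.natAbs_sq _
    have h3 : ((j * (j - 1) : ℕ) : ℤ) = (j : ℤ) * j - j := by
      cases j with
      | zero => simp
      | succ k => push_cast [Nat.add_sub_cancel]; ring
    have h4 : (((2 * m - 1) * (2 * m - j) : ℕ) : ℤ) = (2 * m - 1) * (2 * m - (j : ℤ)) := by
      push_cast [Nat.cast_sub (show 1 ≤ 2 * m by omega), Nat.cast_sub (by omega : j ≤ 2 * m)]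
      ring
    have hexp : j * (j - 1) + (2 * m - 1) * (2 * m - j) =
        3 * m * m - 2 * m + ((j:ℤ) - m).natAbs ^ 2 := by
      have := @Nat.cast_injective ℤ _ _
      apply this
      rw [Nat.cast_add, Nat.cast_add, h1, h2, h3, h4]
      ring
    rw [one_pow, mul_one, ← pow_mul]
    calc (-1) ^ j * X ^ (j * (j - 1)) * gb2 (2 * m) j * (X : PowerSeries ℚ) ^ ((2 * m - 1) * (2 * m - j))
        = (-1) ^ j * X ^ (j * (j - 1) + (2 * m - 1) * (2 * m - j)) * gb2 (2 * m) j := by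
          rw [pow_add]; ring
      _ = (-1) ^ j * X ^ (3 * m * m - 2 * m + ((j:ℤ) - m).natAbs ^ 2) * gb2 (2 * m) j := by
          rw [hexp]
      _ = ((-1) ^ m * X ^ (3 * m * m - 2 * m)) *
            ((-1) ^ (m + j) * X ^ (((j:ℤ) - m).natAbs ^ 2) * gb2 (2 * m) j) := by
          rw [pow_add, ← hsign]; ring
  rw [key] at hc
  have hne : ((-1 : PowerSeries ℚ) ^ m * X ^ (3 * m * m - 2 * m)) ≠ 0 :=
    mul_ne_zero (pow_ne_zero _ (neg_ne_zero.mpr one_ne_zero)) (pow_ne_zero _ X_ne_zero)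
  exact mul_left_cancel₀ hne hc


theorem Fe_succ (r : ℕ) : Fe (r + 1) = Fe r * (1 - X ^ (2 * (r + 1))) :=
  prod_range_succ _ _

theorem gb2_mul_fact : ∀ (n j : ℕ), j ≤ n → gb2 n j * (Fe j * Fe (n - j)) = Fe n := by
  intro n
  induction n with
  | zero =>
    intro j hj
    interval_cases j
    simp [gb2, Fe]
  | succ n ih =>
    intro j hj
    match j with
    | 0 => simp [gb2_zero_right, Fe]
    | j' + 1 =>
      rcases eq_or_lt_of_le hj with heq | hlt
      · obtain rfl : j' = n := by omega
        rw [gb2_self]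
        simp [Fe]
      · have hj'n : j' + 1 ≤ n := by omega
        set c := n - (j' + 1) with hc
        have h1 : n + 1 - (j' + 1) = c + 1 := by omega
        have h2 : n - j' = c + 1 := by omega
        have e1 := ih j' (by omega)
        have e2 := ih (j' + 1) hj'n
        rw [h2] at e1
        rw [← hc] at e2
        rw [h1, gb2]
        calc (gb2 n j' + X ^ (2 * (j' + 1)) * gb2 n (j' + 1)) * (Fe (j' + 1) * Fe (c + 1))
            = (gb2 n j' * (Fe j' * Fe (c + 1))) * (1 - X ^ (2 * (j' + 1)))
              + X ^ (2 * (j' + 1)) * (gb2 n (j' + 1) * (Fe (j' + 1) * Fe c)) *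
                (1 - X ^ (2 * (c + 1))) := by
              rw [Fe_succ j', Fe_succ c]; ring
          _ = Fe n * (1 - X ^ (2 * (j' + 1))) + X ^ (2 * (j' + 1)) * Fe n *
                (1 - X ^ (2 * (c + 1))) := by rw [e1, e2]
          _ = Fe n * (1 - X ^ (2 * (n + 1))) := by
              rw [show 2 * (n + 1) = 2 * (j' + 1) + 2 * (c + 1) by omega, pow_add]; ring
          _ = Fe (n + 1) := (Fe_succ n).symm

theorem constantCoeff_Fe (r : ℕ) : constantCoeff (R := ℚ) (Fe r) = 1 := by
  rw [Fe, map_prod]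
  refine prod_eq_one fun i _ => ?_
  simp [zero_pow]

theorem Fe_ne_zero (r : ℕ) : Fe r ≠ 0 := fun h => by
  have := constantCoeff_Fe r
  rw [h, map_zero] at this
  exact one_ne_zero this.symm

theorem Fe_mul_gb2 (m j : ℕ) (hj : j ≤ 2 * m) :
    Fe m * gb2 (2 * m) j =
      (∏ i ∈ Ico (min j (2 * m - j)) m, (1 - X ^ (2 * (i + 1)))) *
      (∏ i ∈ Ico (max j (2 * m - j)) (2 * m), (1 - X ^ (2 * (i + 1)))) := by
  apply mul_right_cancel₀ (mul_ne_zero (Fe_ne_zero j) (Fe_ne_zero (2 * m - j)))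
  have hfact : Fe m * gb2 (2 * m) j * (Fe j * Fe (2 * m - j)) = Fe m * Fe (2 * m) := by
    rw [mul_assoc, gb2_mul_fact (2 * m) j hj]
  rw [hfact]
  have key : ∀ a b : ℕ, a ≤ b →
      Fe a * ∏ i ∈ Ico a b, (1 - (X : PowerSeries ℚ) ^ (2 * (i + 1))) = Fe b := by
    intro a b hab
    simp only [Fe, range_eq_Ico]
    exact prod_Ico_consecutive _ (Nat.zero_le a) hab
  symm
  rcases le_or_gt j m with hjm | hjm
  · have hmin : min j (2 * m - j) = j := by omega
    have hmax : max j (2 * m - j) = 2 * m - j := by omega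
    rw [hmin, hmax]
    calc (∏ i ∈ Ico j m, (1 - (X:PowerSeries ℚ) ^ (2*(i+1)))) *
          (∏ i ∈ Ico (2*m-j) (2*m), (1 - (X:PowerSeries ℚ) ^ (2*(i+1)))) *
          (Fe j * Fe (2 * m - j))
        = (Fe j * ∏ i ∈ Ico j m, (1 - X ^ (2*(i+1)))) *
          (Fe (2*m-j) * ∏ i ∈ Ico (2*m-j) (2*m), (1 - X ^ (2*(i+1)))) := by ring
      _ = Fe m * Fe (2 * m) := by rw [key j m hjm, key (2*m-j) (2*m) (by omega)]
  · have hmin : min j (2 * m - j) = 2 * m - j := by omega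
    have hmax : max j (2 * m - j) = j := by omega
    rw [hmin, hmax]
    calc (∏ i ∈ Ico (2*m-j) m, (1 - (X:PowerSeries ℚ) ^ (2*(i+1)))) *
          (∏ i ∈ Ico j (2*m), (1 - (X:PowerSeries ℚ) ^ (2*(i+1)))) *
          (Fe j * Fe (2 * m - j))
        = (Fe (2*m-j) * ∏ i ∈ Ico (2*m-j) m, (1 - X ^ (2*(i+1)))) *
          (Fe j * ∏ i ∈ Ico j (2*m), (1 - X ^ (2*(i+1)))) := by ring
      _ = Fe m * Fe (2 * m) := by rw [key (2*m-j) m (by omega), key j (2*m) (by omega)]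

theorem coeff_Fe_gb2 (m j t : ℕ) (hj : j ≤ 2 * m)
    (ht : t + (((j:ℤ) - m).natAbs) ^ 2 ≤ 2 * m) :
    coeff (R := ℚ) t (Fe m * gb2 (2 * m) j) = if t = 0 then 1 else 0 := by
  have hord : t < 2 * (min j (2 * m - j) + 1) := by
    set e := (((j:ℤ) - m).natAbs) with he
    have he2 : e ^ 2 = e * e := sq e
    rw [he2] at ht
    have hme : min j (2 * m - j) = m - e := by omega
    have hee : 2 * e ≤ e * e + 1 := by
      rcases Nat.eq_zero_or_pos e with h0 | h1
      · omega
      · rcases Nat.exists_eq_add_of_le h1 with ⟨f, hf⟩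
        have h2 : e * e = (1 + f) * (1 + f) := by rw [← hf]
        have h3 : (1 + f) * (1 + f) = 1 + 2 * f + f * f := by ring
        omega
    generalize hq : e * e = q at ht hee
    omega
  have hdisj : Disjoint (Ico (min j (2 * m - j)) m) (Ico (max j (2 * m - j)) (2 * m)) := by
    rw [Finset.disjoint_left]
    intro x hx1 hx2
    rw [mem_Ico] at hx1 hx2
    omega
  rw [Fe_mul_gb2 m j hj, ← prod_union hdisj, ← one_mul (∏ i ∈ _ ∪ _, _),
    coeff_mul_prod_one_sub_of_lt_order, coeff_one]
  intro i hi
  rw [mem_union, mem_Ico, mem_Ico] at hi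
  rw [order_X_pow]
  exact_mod_cast lt_of_lt_of_le hord (by omega : 2 * (min j (2 * m - j) + 1) ≤ 2 * (i + 1))

/-- Coefficients of the theta series `1 + 2∑ (-1)^k q^{k²}`. -/
def thc (t : ℕ) : ℚ :=
  if t = 0 then 1 else if Nat.sqrt t ^ 2 = t then 2 * (-1) ^ Nat.sqrt t else 0

theorem star (m t : ℕ) (hm : 2 ≤ m) (ht : t ≤ 2 * m) :
    coeff (R := ℚ) t (Fe m * (Go m * Go m)) = thc t := by
  rw [← lemmaA m (by omega), mul_sum, map_sum]
  have hterm : ∀ j ∈ range (2 * m + 1),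
      coeff (R := ℚ) t (Fe m * ((-1) ^ (m + j) * X ^ (((j:ℤ) - m).natAbs ^ 2) * gb2 (2 * m) j)) =
      if ((j:ℤ) - m).natAbs ^ 2 = t then (-1 : ℚ) ^ (m + j) else 0 := by
    intro j hj
    rw [mem_range] at hj
    obtain ⟨d, hd⟩ : ∃ d, (((j:ℤ) - m).natAbs) ^ 2 = d := ⟨_, rfl⟩
    rw [hd]
    have hC : ((-1 : PowerSeries ℚ) ^ (m + j)) = C (R := ℚ) ((-1) ^ (m + j)) := by
      rw [map_pow, map_neg, map_one]
    rw [show Fe m * ((-1) ^ (m + j) * X ^ d * gb2 (2 * m) j)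
        = ((-1) ^ (m + j)) * ((Fe m * gb2 (2 * m) j) * X ^ d) from by ring, hC, coeff_C_mul,
      coeff_mul_X_pow']
    by_cases hdt : d ≤ t
    · rw [if_pos hdt]
      rw [coeff_Fe_gb2 m j (t - d) (by omega) (by rw [hd]; omega)]
      by_cases h0 : t - d = 0
      · rw [if_pos h0, if_pos (by omega : d = t), mul_one]
      · rw [if_neg h0, if_neg (by omega : ¬ d = t), mul_zero]
    · rw [if_neg hdt, if_neg (by omega : ¬ d = t), mul_zero]
  rw [sum_congr rfl hterm]
  by_cases ht0 : t = 0
  · subst ht0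
    rw [thc, if_pos rfl, Finset.sum_eq_single m]
    · rw [if_pos (by simp), show m + m = 2 * m by ring, pow_mul]
      norm_num
    · intro b hb hbm
      rw [if_neg]
      intro hcon
      have : ((b:ℤ) - m).natAbs = 0 := by
        have := Nat.pow_eq_zero.mp hcon
        tauto
      omega
    · intro hmem
      exact absurd (mem_range.mpr (by omega)) hmem
  · set k := Nat.sqrt t with hk
    by_cases hsq : k ^ 2 = t
    · have hsq' : k * k = t := by rw [← hsq]; ring
      have hk1 : 1 ≤ k := by
        rcases Nat.eq_zero_or_pos k with h0 | h1
        · rw [h0] at hsq'; omega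
        · exact h1
      have hkm : k ≤ m := by
        by_contra hcon
        push_neg at hcon
        nlinarith
      have hpair : ({m - k, m + k} : Finset ℕ) ⊆ range (2 * m + 1) := by
        intro x hx
        simp only [Finset.mem_insert, Finset.mem_singleton] at hx
        rw [mem_range]
        omega
      rw [← Finset.sum_subset hpair]
      · have hne : m - k ≠ m + k := by omega
        rw [Finset.sum_insert (by simp [hne]), Finset.sum_singleton]
        have hv1 : (((m - k : ℕ):ℤ) - m).natAbs ^ 2 = t := by
          have : (((m - k : ℕ):ℤ) - m).natAbs = k := by omega
          rw [this]; exact hsq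
        have hv2 : (((m + k : ℕ):ℤ) - m).natAbs ^ 2 = t := by
          have : (((m + k : ℕ):ℤ) - m).natAbs = k := by omega
          rw [this]; exact hsq
        rw [if_pos hv1, if_pos hv2]
        have hp1 : (-1 : ℚ) ^ (m + (m - k)) = (-1) ^ k := by
          rw [show m + (m - k) = 2 * (m - k) + k by omega, pow_add, pow_mul]
          norm_num
        have hp2 : (-1 : ℚ) ^ (m + (m + k)) = (-1) ^ k := by
          rw [show m + (m + k) = 2 * m + k by omega, pow_add, pow_mul]
          norm_num
        rw [hp1, hp2, thc, if_neg ht0, if_pos (by rw [← hk]; exact hsq)]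
        ring
      · intro x hx hxn
        rw [if_neg]
        intro hcon
        have : ((x:ℤ) - m).natAbs = k := by
          have := Nat.pow_left_injective (by norm_num : (2:ℕ) ≠ 0) (hcon.trans hsq.symm)
          exact this
        simp only [Finset.mem_insert, Finset.mem_singleton] at hxn
        omega
    · rw [Finset.sum_eq_zero, thc, if_neg ht0, if_neg (by rw [← hk]; exact hsq)]
      intro j hj
      rw [if_neg]
      intro hcon
      apply hsq
      have h5 : Nat.sqrt t = ((j:ℤ) - m).natAbs := by
        rw [← hcon, Nat.sqrt_eq']
      rw [hk, h5]
      exact hcon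

def theta : PowerSeries ℚ := PowerSeries.mk thc

theorem coeff_theta (t : ℕ) : coeff (R := ℚ) t theta = thc t := coeff_mk _ _

theorem Qp_two (m : ℕ) : Qp (2 * m) = Go m * Fe m := by
  induction m with
  | zero => simp [Qp, Go, Fe]
  | succ m ih =>
    have h2 : 2 * (m + 1) = (2 * m + 1) + 1 := by ring
    have gsucc : Go (m + 1) = Go m * (1 - X ^ (2 * m + 1)) := prod_range_succ _ _
    rw [h2, Qp, prod_range_succ, prod_range_succ, ← Qp, ih, gsucc, Fe_succ,
      show 2 * m + 1 + 1 = 2 * (m + 1) by ring]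
    ring

theorem Pd_mul_Qp (r : ℕ) : Pd r * Qp r = Fe r := by
  rw [Pd, Qp, Fe, ← prod_mul_distrib]
  refine prod_congr rfl fun i _ => ?_
  have : ((X : PowerSeries ℚ) ^ (i + 1)) ^ 2 = X ^ (2 * (i + 1)) := by
    rw [← pow_mul]; ring_nf
  rw [← this]
  ring

theorem Qp_mul_Pp (r : ℕ) : Qp r * Pp r = 1 := by
  rw [Qp, Pp, ← prod_mul_distrib]
  refine prod_eq_one fun i _ => ?_
  apply PowerSeries.mul_inv_cancel
  simp [zero_pow]

theorem constantCoeff_Qp (r : ℕ) : constantCoeff (R := ℚ) (Qp r) = 1 := by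
  rw [Qp, map_prod]
  exact prod_eq_one fun i _ => by simp [zero_pow]

theorem constantCoeff_Go (r : ℕ) : constantCoeff (R := ℚ) (Go r) = 1 := by
  rw [Go, map_prod]
  exact prod_eq_one fun i _ => by simp [zero_pow]

theorem Fe_split {a b : ℕ} (hab : a ≤ b) :
    Fe a * ∏ i ∈ Ico a b, (1 - (X : PowerSeries ℚ) ^ (2 * (i + 1))) = Fe b := by
  simp only [Fe, range_eq_Ico]
  exact prod_Ico_consecutive _ (Nat.zero_le a) hab

theorem mul_eqUpTo {n : ℕ} {a b : PowerSeries ℚ}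
    (h : ∀ t ≤ n, coeff (R := ℚ) t a = coeff (R := ℚ) t b) (c : PowerSeries ℚ) :
    ∀ t ≤ n, coeff (R := ℚ) t (a * c) = coeff (R := ℚ) t (b * c) := by
  intro t htn
  rw [coeff_mul, coeff_mul]
  refine sum_congr rfl fun p hp => ?_
  rw [Finset.HasAntidiagonal.mem_antidiagonal] at hp
  rw [h p.1 (by omega)]

theorem cancel_eqUpTo {n : ℕ} {a b u : PowerSeries ℚ} (hu : constantCoeff (R := ℚ) u ≠ 0)
    (h : ∀ t ≤ n, coeff (R := ℚ) t (a * u) = coeff (R := ℚ) t (b * u)) :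
    ∀ t ≤ n, coeff (R := ℚ) t a = coeff (R := ℚ) t b := by
  intro t htn
  induction t using Nat.strong_induction_on with
  | _ t ih =>
    have h1 := h t htn
    rw [coeff_mul, coeff_mul, Finset.Nat.sum_antidiagonal_eq_sum_range_succ_mk,
      Finset.Nat.sum_antidiagonal_eq_sum_range_succ_mk, sum_range_succ, sum_range_succ] at h1
    have h2 : ∑ i ∈ range t, coeff (R := ℚ) i a * coeff (R := ℚ) (t - i) u =
        ∑ i ∈ range t, coeff (R := ℚ) i b * coeff (R := ℚ) (t - i) u := by
      refine sum_congr rfl fun i hi => ?_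
      rw [mem_range] at hi
      rw [ih i hi (by omega)]
    rw [h2] at h1
    have h3 : coeff (R := ℚ) t a * coeff (R := ℚ) (t - t) u = coeff (R := ℚ) t b * coeff (R := ℚ) (t - t) u := by
      exact add_left_cancel h1
    have h4 : coeff (R := ℚ) (t - t) u ≠ 0 := by
      rw [Nat.sub_self, coeff_zero_eq_constantCoeff]
      exact hu
    exact mul_right_cancel₀ h4 h3

theorem theta_Pd_eqUpTo (m : ℕ) (hm : 2 ≤ m) :
    ∀ t ≤ 2 * m, coeff (R := ℚ) t (theta * Pd (2 * m)) = coeff (R := ℚ) t (Qp (2 * m)) := by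
  have hstar : ∀ t ≤ 2 * m, coeff (R := ℚ) t (Qp (2 * m) * Go m) = coeff (R := ℚ) t theta := by
    intro t htn
    rw [show Qp (2 * m) * Go m = Fe m * (Go m * Go m) from by rw [Qp_two]; ring,
      star m t hm htn, coeff_theta]
  set U : PowerSeries ℚ := Qp (2 * m) * Go m with hU
  have hUc : constantCoeff (R := ℚ) U ≠ 0 := by
    rw [hU, map_mul, constantCoeff_Qp, constantCoeff_Go]
    norm_num
  refine cancel_eqUpTo hUc ?_
  intro t htn
  have lhs1 : theta * Pd (2 * m) * U = (theta * Qp (2 * m)) *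
      ∏ i ∈ Ico m (2 * m), (1 - (X : PowerSeries ℚ) ^ (2 * (i + 1))) := by
    rw [hU]
    have h1 : theta * Pd (2 * m) * (Qp (2 * m) * Go m)
        = theta * Go m * (Pd (2 * m) * Qp (2 * m)) := by ring
    rw [h1, Pd_mul_Qp, ← Fe_split (show m ≤ 2 * m by omega), Qp_two]
    ring
  rw [lhs1, coeff_mul_prod_one_sub_of_lt_order]
  · have h2 := mul_eqUpTo hstar (Qp (2 * m)) t htn
    rw [mul_comm (Qp (2 * m)) U]
    exact h2.symm
  · intro i hi
    rw [mem_Ico] at hi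
    rw [order_X_pow]
    exact_mod_cast (by omega : t < 2 * (i + 1))

theorem theta_mul_coeff (m n : ℕ) (hm : 2 ≤ m) (hn : 1 ≤ n) (hnm : n ≤ 2 * m) :
    coeff (R := ℚ) n (theta * (Pd (2 * m) * Pp (2 * m))) = 0 := by
  have h1 : ∀ t ≤ 2 * m, coeff (R := ℚ) t (theta * Pd (2 * m) * Pp (2 * m)) =
      coeff (R := ℚ) t (Qp (2 * m) * Pp (2 * m)) :=
    mul_eqUpTo (theta_Pd_eqUpTo m hm) (Pp (2 * m))
  rw [← mul_assoc, h1 n hnm, Qp_mul_Pp]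
  rw [coeff_one, if_neg (by omega)]

theorem univGF_prop (n m : ℕ) (h : n ≤ m) :
    ((Fintype.card (Nat.Partition n) : ℚ)) = coeff (R := ℚ) n (Pp m) := by
  have hs : ∀ i ∈ (range m).map ⟨Nat.succ, Nat.succ_injective⟩, 0 < i := by
    simp only [mem_map, Function.Embedding.coeFn_mk]
    rintro i ⟨a, -, rfl⟩
    exact Nat.succ_pos a
  have hp := partialGF_prop ℚ n ((range m).map ⟨Nat.succ, Nat.succ_injective⟩) hs
      (fun _ => Set.univ) (fun _ _ => trivial)
  have hcard : #{p : n.Partition | (∀ j : ℕ, p.parts.count j ∈ (Set.univ : Set ℕ)) ∧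
      ∀ j ∈ p.parts, j ∈ (range m).map ⟨Nat.succ, Nat.succ_injective⟩}
      = Fintype.card n.Partition := by
    rw [← Finset.card_univ]
    congr 1
    refine Finset.filter_true_of_mem fun p _ => ⟨fun j => Set.mem_univ _, fun j hj => ?_⟩
    have hjn : j ≤ n := by
      simpa [p.parts_sum] using Multiset.single_le_sum (fun _ _ => Nat.zero_le _) _ hj
    have hj1 : 0 < j := p.parts_pos hj
    rw [mem_map]
    exact ⟨j - 1, mem_range.mpr (by omega), by simpa using Nat.succ_pred_eq_of_pos hj1⟩
  have hprod : ∏ i ∈ (range m).map ⟨Nat.succ, Nat.succ_injective⟩,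
      indicatorSeries ℚ ((· * i) '' Set.univ) = Pp m := by
    rw [Finset.prod_map, Pp]
    refine prod_congr rfl fun i _ => ?_
    simp only [Function.Embedding.coeFn_mk]
    rw [num_series']
    refine congrArg (indicatorSeries ℚ) (Set.ext fun k => ⟨?_, ?_⟩)
    · rintro ⟨p, -, rfl⟩
      exact Dvd.intro_left p rfl
    · rintro ⟨c, rfl⟩
      exact ⟨c, trivial, mul_comm _ _⟩
  rw [← hcard, hp, hprod]

theorem coeff_Pd_Pp (n m : ℕ) (h : n ≤ m) :
    coeff (R := ℚ) n (Pd m * Pp m) = (overpartition n : ℚ) := by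
  rw [coeff_mul, Finset.Nat.sum_antidiagonal_eq_sum_range_succ_mk, overpartition]
  push_cast
  refine sum_congr rfl fun i hi => ?_
  rw [mem_range] at hi
  congr 1
  · exact (distinctGF_prop i m (by omega)).symm
  · exact (univGF_prop (n - i) m (by omega)).symm

theorem key_numeric (n : ℕ) (hn : 1 ≤ n) :
    (overpartition n : ℚ) =
      ∑ k ∈ Icc 1 (Nat.sqrt n), 2 * (-1 : ℚ) ^ (k + 1) * (overpartition (n - k ^ 2) : ℚ) := by
  have h0 := theta_mul_coeff (n + 2) n (by omega) hn (by omega)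
  rw [coeff_mul, Finset.Nat.sum_antidiagonal_eq_sum_range_succ_mk] at h0
  have hterm : ∀ i ∈ range (n + 1),
      coeff (R := ℚ) i theta * coeff (R := ℚ) (n - i) (Pd (2 * (n + 2)) * Pp (2 * (n + 2)))
      = thc i * (overpartition (n - i) : ℚ) := by
    intro i hi
    rw [coeff_theta, coeff_Pd_Pp (n - i) (2 * (n + 2)) (by omega)]
  rw [sum_congr rfl hterm, sum_range_succ'] at h0
  have h00 : thc 0 * (overpartition (n - 0) : ℚ) = (overpartition n : ℚ) := by
    rw [thc]
    norm_num
  rw [h00] at h0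
  have hIco : ∑ i ∈ range n, thc (i + 1) * (overpartition (n - (i + 1)) : ℚ)
      = ∑ a ∈ Ico 1 (n + 1), thc a * (overpartition (n - a) : ℚ) := by
    rw [Finset.sum_Ico_eq_sum_range]
    simp only [Nat.add_sub_cancel]
    refine sum_congr rfl fun i _ => ?_
    rw [add_comm 1 i]
  rw [hIco] at h0
  have hinj : ∀ x ∈ Icc 1 (Nat.sqrt n), ∀ y ∈ Icc 1 (Nat.sqrt n), x ^ 2 = y ^ 2 → x = y :=
    fun x _ y _ h => Nat.pow_left_injective (by norm_num : (2:ℕ) ≠ 0) h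
  have himg : ∑ a ∈ Ico 1 (n + 1), thc a * (overpartition (n - a) : ℚ)
      = ∑ k ∈ Icc 1 (Nat.sqrt n), thc (k ^ 2) * (overpartition (n - k ^ 2) : ℚ) := by
    have himg2 : ∑ a ∈ (Icc 1 (Nat.sqrt n)).image (fun k => k ^ 2),
        thc a * (overpartition (n - a) : ℚ)
        = ∑ k ∈ Icc 1 (Nat.sqrt n), thc (k ^ 2) * (overpartition (n - k ^ 2) : ℚ) :=
      Finset.sum_image hinj
    rw [← himg2]
    refine (Finset.sum_subset ?_ ?_).symm
    · intro x hx
      rw [Finset.mem_image] at hx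
      obtain ⟨k, hk, rfl⟩ := hx
      rw [mem_Icc] at hk
      have : k * k ≤ n := Nat.le_sqrt.mp hk.2
      rw [mem_Ico, pow_two]
      constructor
      · nlinarith [hk.1]
      · omega
    · intro x hx hxn
      rw [mem_Ico] at hx
      rw [thc, if_neg (by omega : ¬ x = 0)]
      by_cases hsq : Nat.sqrt x ^ 2 = x
      · exfalso
        apply hxn
        rw [Finset.mem_image]
        refine ⟨Nat.sqrt x, ?_, hsq⟩
        rw [mem_Icc]
        constructor
        · rw [Nat.le_sqrt]
          omega
        · exact Nat.sqrt_le_sqrt (by omega)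
      · rw [if_neg hsq, zero_mul]
  rw [himg] at h0
  have hthc : ∀ k ∈ Icc 1 (Nat.sqrt n), thc (k ^ 2) * (overpartition (n - k ^ 2) : ℚ)
      = -(2 * (-1) ^ (k + 1) * (overpartition (n - k ^ 2) : ℚ)) := by
    intro k hk
    rw [mem_Icc] at hk
    have hk0 : ¬ k ^ 2 = 0 := by
      have := hk.1
      positivity
    have hsq : Nat.sqrt (k ^ 2) = k := Nat.sqrt_eq' k
    rw [thc, if_neg hk0, hsq, if_pos rfl, pow_succ]
    ring
  rw [sum_congr rfl hthc, Finset.sum_neg_distrib] at h0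
  linarith

end

end OverpartitionAux

/-- For every `n ≥ 1`,
`p̄(n) = 2 ∑_{k=1}^{⌊√n⌋} (-1)^{k+1} p̄(n - k²)`. -/
theorem overpartition_recurrence (n : ℕ) (hn : 1 ≤ n) :
    (overpartition n : ℤ) =
      2 * ∑ k ∈ Finset.Icc 1 (Nat.sqrt n),
        (-1 : ℤ) ^ (k + 1) * pbarZ ((n : ℤ) - (k : ℤ) ^ 2) := by
  have hq := OverpartitionAux.key_numeric n hn
  have hsub : ∀ k ∈ Finset.Icc 1 (Nat.sqrt n),
      (-1 : ℤ) ^ (k + 1) * pbarZ ((n : ℤ) - (k : ℤ) ^ 2)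
        = (-1 : ℤ) ^ (k + 1) * (overpartition (n - k ^ 2) : ℤ) := by
    intro k hk
    rw [Finset.mem_Icc] at hk
    have hk2 : k * k ≤ n := Nat.le_sqrt.mp hk.2
    have hcast : (k : ℤ) ^ 2 = ((k * k : ℕ) : ℤ) := by push_cast; ring
    have hnn : ¬ ((n : ℤ) - (k : ℤ) ^ 2 < 0) := by
      rw [hcast]
      omega
    have harg : ((n : ℤ) - (k : ℤ) ^ 2).toNat = n - k ^ 2 := by
      rw [hcast, pow_two]
      omega
    rw [pbarZ, if_neg hnn, harg]
  rw [Finset.sum_congr rfl hsub]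
  apply Int.cast_injective (α := ℚ)
  push_cast
  rw [hq, Finset.mul_sum]
  refine Finset.sum_congr rfl fun k _ => by ring
end

section
/- Let n ≥ 1 be a fixed positive integer and let N ≥ 1 be an integer. Then the tail series R̃(n, N) = (1/(4n)) ∑_{k > N, k odd} k^{−1/2} Ã_k(n) U(π√n / k) converges absolutely and satisfies |R̃(n, N)| ≤ M(n, N), where M(n, N) := (1/(4π)) ((N+1)/n)^{3/2} ( (π√n/(N+1)) cosh(π√n/(N+1)) + (2N+1) sinh(π√n/(N+1)) − 2π√n ). -/
/-- The Dedekind sum `s(h,k) = ∑_{r=1}^{k-1} (r/k)(hr/k - ⌊hr/k⌋ - 1/2)`. -/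
def dedekindSum (h : ℤ) (k : ℕ) : ℚ :=
  ∑ r ∈ Finset.Icc 1 (k - 1),
    ((r : ℚ) / k) * ((h : ℚ) * r / k - ⌊(h : ℚ) * r / k⌋ - 1 / 2)

/-- `ω(h,k) = e^{π i s(h,k)}`. -/
noncomputable def omegaHK (h : ℤ) (k : ℕ) : ℂ :=
  Complex.exp (Real.pi * Complex.I * (dedekindSum h k : ℂ))

/-- `Ã_k(n) = ∑_{0 ≤ h < k, gcd(h,k)=1} (ω(h,k)² / ω(2h,k)) e^{-2πinh/k}`. -/
noncomputable def Atilde (k : ℕ) (n : ℤ) : ℂ :=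
  ∑ h ∈ Finset.range k,
    if Nat.gcd h k = 1 then
      (omegaHK h k) ^ 2 / omegaHK (2 * h) k *
        Complex.exp (-2 * Real.pi * Complex.I * n * h / k)
    else 0

/-- `U(x) = cosh x - sinh x / x`. -/
noncomputable def Ufun (x : ℝ) : ℝ := Real.cosh x - Real.sinh x / x

/-- The error bound `M(n,N)`. -/
noncomputable def Mbound (n N : ℕ) : ℝ :=
  (1 / (4 * Real.pi)) * (((N : ℝ) + 1) / n) ^ ((3 : ℝ) / 2) *
    (Real.pi * Real.sqrt n / (N + 1) * Real.cosh (Real.pi * Real.sqrt n / (N + 1)) +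
      (2 * N + 1) * Real.sinh (Real.pi * Real.sqrt n / (N + 1)) - 2 * Real.pi * Real.sqrt n)

section Aux

lemma abs_omega (h : ℤ) (k : ℕ) : ‖omegaHK h k‖ = 1 := by
  unfold omegaHK
  rw [show (Real.pi : ℂ) * Complex.I * ((dedekindSum h k : ℚ) : ℂ)
      = ((Real.pi * ((dedekindSum h k : ℚ) : ℝ) : ℝ) : ℂ) * Complex.I by push_cast; ring]
  exact Complex.norm_exp_ofReal_mul_I _

lemma norm_Atilde_le (k : ℕ) (n : ℤ) : ‖Atilde k n‖ ≤ k := by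
  unfold Atilde
  refine (norm_sum_le _ _).trans ?_
  have : ∀ h ∈ Finset.range k, ‖if Nat.gcd h k = 1 then
      (omegaHK h k) ^ 2 / omegaHK (2 * h) k *
        Complex.exp (-2 * Real.pi * Complex.I * n * h / k) else 0‖ ≤ 1 := by
    intro h _
    split_ifs with hg
    · rw [norm_mul, norm_div, norm_pow, abs_omega, abs_omega]
      rw [show (-2 * (Real.pi : ℂ) * Complex.I * n * h / k)
          = ((-2 * Real.pi * (n : ℝ) * (h : ℝ) / (k : ℝ) : ℝ) : ℂ) * Complex.I by push_cast; ring]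
      rw [Complex.norm_exp_ofReal_mul_I]
      norm_num
    · simp
  refine (Finset.sum_le_sum this).trans ?_
  simp

lemma hasSum_cosh_sub_one (x : ℝ) :
    HasSum (fun m : ℕ => x ^ (2 * m + 2) / (2 * m + 2).factorial) (Real.cosh x - 1) := by
  have h := Real.hasSum_cosh x
  have h2 := (hasSum_nat_add_iff' (f := fun m : ℕ => x ^ (2 * m) / (2 * m).factorial) 1).2 h
  simp only [Finset.range_one, Finset.sum_singleton] at h2
  norm_num at h2
  exact h2

lemma hasSum_sinh_aux {x : ℝ} (hx : x ≠ 0) :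
    HasSum (fun m : ℕ => x ^ (2 * m + 2) / (2 * m + 3).factorial) (Real.sinh x / x - 1) := by
  have h := (Real.hasSum_sinh x).div_const x
  have h2 := (hasSum_nat_add_iff'
    (f := fun m : ℕ => x ^ (2 * m + 1) / (2 * m + 1).factorial / x) 1).2 h
  simp only [Finset.range_one, Finset.sum_singleton] at h2
  norm_num [div_self hx] at h2
  have h4 : (fun m : ℕ => x ^ (2 * (m + 1) + 1) / ((2 * (m + 1) + 1).factorial) / x)
      = fun m : ℕ => x ^ (2 * m + 2) / (2 * m + 3).factorial := by
    funext m
    rw [show 2 * (m + 1) + 1 = (2 * m + 2) + 1 by ring, pow_succ,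
      show (2 * m + 2) + 1 = 2 * m + 3 by ring]
    field_simp
  rw [h4] at h2
  exact h2

lemma hasSum_U {x : ℝ} (hx : 0 < x) :
    HasSum (fun m : ℕ => ((2 * m + 2 : ℕ) : ℝ) / (2 * m + 3).factorial * x ^ (2 * m + 2))
      (Ufun x) := by
  have h3 := (hasSum_cosh_sub_one x).sub (hasSum_sinh_aux hx.ne')
  have he : Ufun x = (Real.cosh x - 1) - (Real.sinh x / x - 1) := by unfold Ufun; ring
  rw [← he] at h3
  convert h3 using 1
  · rfl
  funext m
  have hf : ((2 * m + 3).factorial : ℝ) = ((2 * m + 3 : ℕ) : ℝ) * ((2 * m + 2).factorial : ℝ) := by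
    rw [show 2 * m + 3 = (2 * m + 2) + 1 by ring, Nat.factorial_succ]
    push_cast; ring
  have p1 : ((2 * m + 2).factorial : ℝ) ≠ 0 := by positivity
  have p2 : ((2 * m + 3 : ℕ) : ℝ) ≠ 0 := by positivity
  rw [hf]
  push_cast
  field_simp
  ring

lemma Ufun_nonneg {x : ℝ} (hx : 0 < x) : 0 ≤ Ufun x := by
  refine (hasSum_U hx).nonneg fun m => by positivity

lemma step_ineq {s : ℝ} (hs : 3/2 ≤ s) {c : ℝ} (hc : 1 ≤ c) :
    (c + 2) ^ (-s) ≤ (c ^ (1 - s) - (c + 2) ^ (1 - s)) / (2 * (s - 1)) := by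
  have hc0 : (0:ℝ) < c := by linarith
  have hd0 : (0:ℝ) < c + 2 := by linarith
  have hs1 : (0:ℝ) < s - 1 := by linarith
  have hB : 1 + s * (2 / c) ≤ (1 + 2 / c) ^ s := by
    refine one_add_mul_self_le_rpow_one_add ?_ (by linarith)
    have : (0:ℝ) ≤ 2 / c := by positivity
    linarith
  rw [show (1:ℝ) + 2 / c = (c + 2) / c by field_simp] at hB
  rw [Real.div_rpow hd0.le hc0.le] at hB
  set A := c ^ s with hA
  set B := (c + 2) ^ s with hB2
  have hApos : (0:ℝ) < A := Real.rpow_pos_of_pos hc0 s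
  have hBpos : (0:ℝ) < B := Real.rpow_pos_of_pos hd0 s
  rw [le_div_iff₀ hApos] at hB
  have key : A * (c + 2 * s) ≤ c * B := by
    have h4 := mul_le_mul_of_nonneg_left hB hc0.le
    calc A * (c + 2 * s) = c * ((1 + s * (2 / c)) * A) := by field_simp
    _ ≤ c * B := h4
  have e1 : c ^ (1 - s) = c / A := by
    rw [hA, Real.rpow_sub hc0, Real.rpow_one]
  have e2 : (c + 2) ^ (1 - s) = (c + 2) / B := by
    rw [hB2, Real.rpow_sub hd0, Real.rpow_one]
  have e3 : (c + 2) ^ (-s) = 1 / B := by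
    rw [hB2, Real.rpow_neg hd0.le, one_div]
  have expand : (c / A - (c + 2) / B) / (2 * (s - 1))
      = (c * B - (c + 2) * A) / (A * B * (2 * (s - 1))) := by
    field_simp
  rw [e1, e2, e3, expand, div_le_div_iff₀ hBpos (by positivity)]
  have k2 : 2 * (s - 1) * A ≤ c * B - (c + 2) * A := by nlinarith [key]
  nlinarith [mul_le_mul_of_nonneg_right k2 hBpos.le, hApos, hBpos]

lemma tail_sum_le {s : ℝ} (hs : 3/2 ≤ s) (K : ℕ) (hK : 1 ≤ K) :
    Summable (fun j : ℕ => ((K : ℝ) + 2 * j) ^ (-s)) ∧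
    ∑' j : ℕ, ((K : ℝ) + 2 * j) ^ (-s) ≤ (K : ℝ) ^ (-s) + (K : ℝ) ^ (1 - s) / (2 * (s - 1)) := by
  have hK0 : (1:ℝ) ≤ (K:ℝ) := by exact_mod_cast hK
  have hs1 : (0:ℝ) < s - 1 := by linarith
  set G : ℕ → ℝ := fun j => ((K : ℝ) + 2 * j) ^ (1 - s) / (2 * (s - 1)) with hG
  have hGnn : ∀ j, 0 ≤ G j := by
    intro j
    have h0 : (0:ℝ) < (K : ℝ) + 2 * j := by positivity
    simp only [hG]
    positivity
  have hstep : ∀ j : ℕ, ((K : ℝ) + 2 * ((j + 1 : ℕ) : ℝ)) ^ (-s) ≤ G j - G (j + 1) := by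
    intro j
    have hj : (0:ℝ) ≤ 2 * (j:ℝ) := by positivity
    have hc : (1:ℝ) ≤ (K : ℝ) + 2 * j := by linarith
    have h := step_ineq hs hc
    have harg : (K : ℝ) + 2 * ((j + 1 : ℕ) : ℝ) = ((K : ℝ) + 2 * j) + 2 := by push_cast; ring
    simp only [hG]
    rw [harg, ← sub_div]
    exact h
  have hG0 : G 0 = (K : ℝ) ^ (1 - s) / (2 * (s - 1)) := by simp [hG]
  have hpart : ∀ J : ℕ, ∑ j ∈ Finset.range J, ((K : ℝ) + 2 * j) ^ (-s)
      ≤ (K : ℝ) ^ (-s) + (K : ℝ) ^ (1 - s) / (2 * (s - 1)) := by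
    intro J
    cases J with
    | zero =>
      simp
      positivity
    | succ J' =>
      rw [Finset.sum_range_succ']
      have h1 : ∑ i ∈ Finset.range J', ((K : ℝ) + 2 * ((i + 1 : ℕ) : ℝ)) ^ (-s)
          ≤ G 0 - G J' := by
        rw [← Finset.sum_range_sub' G J']
        exact Finset.sum_le_sum fun i _ => hstep i
      have hf0 : ((K : ℝ) + 2 * ((0 : ℕ) : ℝ)) ^ (-s) = (K : ℝ) ^ (-s) := by norm_num
      rw [hf0]
      linarith [h1, hGnn J']
  have hnn : ∀ j : ℕ, 0 ≤ ((K : ℝ) + 2 * j) ^ (-s) := by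
    intro j; positivity
  exact ⟨summable_of_sum_range_le hnn hpart, Real.tsum_le_of_sum_range_le hnn hpart⟩

lemma sqrt_div_pow (x : ℝ) (hx : 0 < x) (m : ℕ) :
    Real.sqrt x / x ^ (2 * m + 2) = x ^ (-(2 * (m:ℝ) + 3/2)) := by
  rw [Real.sqrt_eq_rpow, ← Real.rpow_natCast x (2 * m + 2), ← Real.rpow_sub hx]
  congr 1
  push_cast
  ring

lemma coeff_ineq (m N : ℕ) (hN : 1 ≤ N) :
    ((2 * m + 2 : ℕ) : ℝ) / (2 * m + 3).factorial * (1 + ((N:ℝ) + 1) / (4 * m + 1))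
      ≤ 1 / ((2 * m + 2).factorial) + (2 * (N:ℝ) + 1) / ((2 * m + 3).factorial) := by
  have hf : ((2 * m + 3).factorial : ℝ)
      = ((2 * m + 3 : ℕ) : ℝ) * ((2 * m + 2).factorial : ℝ) := by
    rw [show 2 * m + 3 = (2 * m + 2) + 1 by ring, Nat.factorial_succ]
    push_cast; ring
  have p1 : (0:ℝ) < ((2 * m + 2).factorial : ℝ) := by positivity
  have hm : (0:ℝ) ≤ (m:ℝ) := Nat.cast_nonneg m
  have hNr : (1:ℝ) ≤ (N:ℝ) := by exact_mod_cast hN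
  have key : ((2:ℝ)*m+2) * ((4*(m:ℝ)+1) + ((N:ℝ)+1)) ≤ (4*(m:ℝ)+1) * ((2*(m:ℝ)+3) + (2*(N:ℝ)+1)) := by
    nlinarith [mul_nonneg hm (by linarith : (0:ℝ) ≤ (N:ℝ)), hm]
  rw [hf]
  push_cast
  rw [show (1:ℝ) + ((N:ℝ)+1)/(4*(m:ℝ)+1) = ((4*(m:ℝ)+1) + ((N:ℝ)+1))/(4*(m:ℝ)+1) by
    field_simp]
  rw [div_mul_div_comm, div_add_div _ _ (ne_of_gt p1) (by positivity),
    div_le_div_iff₀ (by positivity) (by positivity)]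
  nlinarith [mul_le_mul_of_nonneg_right key
    (by positivity : (0:ℝ) ≤ ((2*m+2).factorial : ℝ) * ((2*m+2).factorial : ℝ) * (2*(m:ℝ)+3))]

noncomputable def sExp (m : ℕ) : ℝ := 2 * (m:ℝ) + 3/2

noncomputable def cCoef (b : ℝ) (m : ℕ) : ℝ :=
  ((2 * m + 2 : ℕ) : ℝ) / (2 * m + 3).factorial * b ^ (2 * m + 2)

noncomputable def psi (b : ℝ) (N : ℕ) (m k : ℕ) : ℝ :=
  if Odd k ∧ N < k then cCoef b m * (k : ℝ) ^ (-(sExp m)) else 0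

lemma sExp_ge (m : ℕ) : 3/2 ≤ sExp m := by
  unfold sExp
  have : (0:ℝ) ≤ (m:ℝ) := Nat.cast_nonneg m
  linarith

lemma cCoef_nonneg {b : ℝ} (hb : 0 ≤ b) (m : ℕ) : 0 ≤ cCoef b m := by
  unfold cCoef; positivity

lemma psi_nonneg {b : ℝ} (hb : 0 ≤ b) (N m k : ℕ) : 0 ≤ psi b N m k := by
  unfold psi
  split_ifs with h
  · have := cCoef_nonneg hb m
    positivity
  · exact le_refl 0

lemma hasSum_psi_point {b : ℝ} (hb : 0 < b) {N k : ℕ} (hk : Odd k ∧ N < k) (hk1 : 0 < k) :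
    HasSum (fun m => psi b N m k) (Real.sqrt k * Ufun (b / k)) := by
  have hk0 : (0:ℝ) < (k:ℝ) := by exact_mod_cast hk1
  have hx : 0 < b / k := by positivity
  have h := (hasSum_U hx).mul_left (Real.sqrt k)
  have heq : (fun m => psi b N m k)
      = fun m : ℕ => Real.sqrt k *
        (((2 * m + 2 : ℕ) : ℝ) / (2 * m + 3).factorial * (b / k) ^ (2 * m + 2)) := by
    funext m
    unfold psi
    rw [if_pos hk]
    unfold cCoef
    rw [div_pow, show (k:ℝ) ^ (-(sExp m)) = Real.sqrt k / (k:ℝ) ^ (2 * m + 2) by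
      rw [sqrt_div_pow _ hk0 m]; unfold sExp; norm_num]
    ring
  rw [heq]
  exact h

lemma psi_k_bound {b : ℝ} (hb : 0 < b) {N : ℕ} (hN : 1 ≤ N) (m : ℕ) :
    Summable (fun k => psi b N m k) ∧
    ∑' k, psi b N m k ≤ cCoef b m *
      (((N:ℝ) + 1) ^ (-(sExp m)) + ((N:ℝ) + 1) ^ (1 - sExp m) / (2 * (sExp m - 1))) := by
  set K : ℕ := N + 1 + N % 2 with hK
  have hK1 : 1 ≤ K := by omega
  have hKge : N + 1 ≤ K := by omega
  set e : ℕ → ℕ := fun j => K + 2 * j with he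
  have hinj : Function.Injective e := by intro x y hxy; simp only [he] at hxy; omega
  have hcond : ∀ j, Odd (e j) ∧ N < e j := by
    intro j
    refine ⟨Nat.odd_iff.2 ?_, ?_⟩ <;> simp only [he, hK] <;> omega
  have hsupp : ∀ x ∉ Set.range e, psi b N m x = 0 := by
    intro k hk
    by_cases hc : Odd k ∧ N < k
    · have hk2 := Nat.odd_iff.1 hc.1
      have hk3 := hc.2
      exact absurd ⟨(k - K) / 2, by simp only [he]; omega⟩ hk
    · simp [psi, hc]
  have hsupp' : Function.support (fun k => psi b N m k) ⊆ Set.range e := by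
    intro k hk
    by_contra hmem
    exact hk (hsupp k hmem)
  have hts := tail_sum_le (sExp_ge m) K hK1
  have hcomp : ∀ j, cCoef b m * ((K : ℝ) + 2 * j) ^ (-(sExp m)) = psi b N m (e j) := by
    intro j
    unfold psi
    rw [if_pos (hcond j)]
    congr 2
    simp only [he]
    push_cast
    ring
  have hsum_j : Summable (fun j => psi b N m (e j)) :=
    (hts.1.mul_left (cCoef b m)).congr hcomp
  have hsum_k : Summable (fun k => psi b N m k) := (hinj.summable_iff hsupp).1 hsum_j
  refine ⟨hsum_k, ?_⟩
  rw [← hinj.tsum_eq hsupp']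
  have h1 : ∑' j, psi b N m (e j)
      = cCoef b m * ∑' j : ℕ, ((K : ℝ) + 2 * j) ^ (-(sExp m)) :=
    (tsum_congr fun j => (hcomp j).symm).trans tsum_mul_left
  rw [h1]
  have hNR0 : (0:ℝ) < (N:ℝ) + 1 := by positivity
  have hKcast : (N:ℝ) + 1 ≤ (K:ℝ) := by
    have : ((N + 1 : ℕ) : ℝ) ≤ (K:ℝ) := by exact_mod_cast hKge
    push_cast at this
    linarith
  have hs := sExp_ge m
  have h2 : (K:ℝ) ^ (-(sExp m)) ≤ ((N:ℝ) + 1) ^ (-(sExp m)) :=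
    Real.rpow_le_rpow_of_nonpos hNR0 hKcast (by linarith)
  have h3 : (K:ℝ) ^ (1 - sExp m) ≤ ((N:ℝ) + 1) ^ (1 - sExp m) :=
    Real.rpow_le_rpow_of_nonpos hNR0 hKcast (by linarith)
  have hden : (0:ℝ) < 2 * (sExp m - 1) := by linarith
  refine mul_le_mul_of_nonneg_left ?_ (cCoef_nonneg hb.le m)
  refine hts.2.trans (add_le_add h2 ((div_le_div_iff_of_pos_right hden).2 h3))

lemma B_le_t {b : ℝ} (hb : 0 < b) {N : ℕ} (hN : 1 ≤ N) (m : ℕ) :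
    cCoef b m *
      (((N:ℝ) + 1) ^ (-(sExp m)) + ((N:ℝ) + 1) ^ (1 - sExp m) / (2 * (sExp m - 1)))
    ≤ Real.sqrt ((N:ℝ) + 1) * ((b / ((N:ℝ) + 1)) ^ (2 * m + 2) / (2 * m + 2).factorial)
      + (2 * (N:ℝ) + 1) * Real.sqrt ((N:ℝ) + 1) *
        ((b / ((N:ℝ) + 1)) ^ (2 * m + 2) / (2 * m + 3).factorial) := by
  have hNR0 : (0:ℝ) < (N:ℝ) + 1 := by positivity
  have e1 : ((N:ℝ) + 1) ^ (-(sExp m))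
      = Real.sqrt ((N:ℝ) + 1) / ((N:ℝ) + 1) ^ (2 * m + 2) := by
    rw [sqrt_div_pow _ hNR0 m]; unfold sExp; norm_num
  have e2 : ((N:ℝ) + 1) ^ (1 - sExp m)
      = ((N:ℝ) + 1) * (Real.sqrt ((N:ℝ) + 1) / ((N:ℝ) + 1) ^ (2 * m + 2)) := by
    rw [show (1:ℝ) - sExp m = 1 + (-(sExp m)) by ring, Real.rpow_add hNR0, Real.rpow_one, e1]
  have e3 : 2 * (sExp m - 1) = 4 * (m:ℝ) + 1 := by unfold sExp; ring
  have e4 : (b / ((N:ℝ) + 1)) ^ (2 * m + 2) = b ^ (2 * m + 2) / ((N:ℝ) + 1) ^ (2 * m + 2) :=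
    div_pow b _ _
  have hci := coeff_ineq m N hN
  have hD : (0:ℝ) ≤ b ^ (2 * m + 2) * (Real.sqrt ((N:ℝ) + 1) / ((N:ℝ) + 1) ^ (2 * m + 2)) := by
    positivity
  have h := mul_le_mul_of_nonneg_right hci hD
  rw [e1, e2, e3, e4]
  unfold cCoef
  have lhs_eq : ((2 * m + 2 : ℕ) : ℝ) / (2 * m + 3).factorial * b ^ (2 * m + 2) *
        (Real.sqrt ((N:ℝ) + 1) / ((N:ℝ) + 1) ^ (2 * m + 2)
          + ((N:ℝ) + 1) * (Real.sqrt ((N:ℝ) + 1) / ((N:ℝ) + 1) ^ (2 * m + 2)) / (4 * (m:ℝ) + 1))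
      = ((2 * m + 2 : ℕ) : ℝ) / (2 * m + 3).factorial * (1 + ((N:ℝ) + 1) / (4 * (m:ℝ) + 1)) *
        (b ^ (2 * m + 2) * (Real.sqrt ((N:ℝ) + 1) / ((N:ℝ) + 1) ^ (2 * m + 2))) := by
    ring
  have rhs_eq : (1 / (((2 * m + 2).factorial : ℝ)) + (2 * (N:ℝ) + 1) / ((2 * m + 3).factorial)) *
        (b ^ (2 * m + 2) * (Real.sqrt ((N:ℝ) + 1) / ((N:ℝ) + 1) ^ (2 * m + 2)))
      = Real.sqrt ((N:ℝ) + 1) * (b ^ (2 * m + 2) / ((N:ℝ) + 1) ^ (2 * m + 2) / (2 * m + 2).factorial)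
      + (2 * (N:ℝ) + 1) * Real.sqrt ((N:ℝ) + 1) *
        (b ^ (2 * m + 2) / ((N:ℝ) + 1) ^ (2 * m + 2) / (2 * m + 3).factorial) := by
    ring
  rw [lhs_eq, ← rhs_eq]
  exact h

end Aux

/-- The tail series `R̃(n,N) = (1/(4n)) ∑_{k > N, k odd} k^{-1/2} Ã_k(n) U(π√n/k)` converges
absolutely and satisfies `|R̃(n,N)| ≤ M(n,N)`. -/
theorem tail_abs_bound (n N : ℕ) (hn : 1 ≤ n) (hN : 1 ≤ N) :
    Summable (fun k : ℕ =>
      ‖if Odd k ∧ N < k then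
          (1 / (Real.sqrt k : ℂ)) * Atilde k n * ((Ufun (Real.pi * Real.sqrt n / k)) : ℂ)
        else 0‖) ∧
    ‖(1 / (4 * (n : ℂ))) * ∑' k : ℕ,
        if Odd k ∧ N < k then
          (1 / (Real.sqrt k : ℂ)) * Atilde k n * ((Ufun (Real.pi * Real.sqrt n / k)) : ℂ)
        else 0‖ ≤ Mbound n N := by

  have hn0 : (0:ℝ) < (n:ℝ) := by exact_mod_cast hn
  have hb : (0:ℝ) < Real.pi * Real.sqrt n := by positivity
  set b := Real.pi * Real.sqrt n with hbdef
  have hNR0 : (0:ℝ) < (N:ℝ) + 1 := by positivity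
  set f : ℕ → ℂ := fun k => if Odd k ∧ N < k then
      (1 / (Real.sqrt k : ℂ)) * Atilde k n * ((Ufun (b / k)) : ℂ) else 0 with hfdef
  set g : ℕ → ℝ := fun k => if Odd k ∧ N < k then Real.sqrt k * Ufun (b / k) else 0 with hgdef
  have hle : ∀ k, ‖f k‖ ≤ g k := by
    intro k
    simp only [hfdef, hgdef]
    split_ifs with h
    · have hk1 : 0 < k := by omega
      have hk0 : (0:ℝ) < (k:ℝ) := by exact_mod_cast hk1
      have hs0 : 0 < Real.sqrt k := Real.sqrt_pos.2 hk0
      have hU : 0 ≤ Ufun (b / k) := Ufun_nonneg (by positivity)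
      rw [norm_mul, norm_mul, norm_div, norm_one, Complex.norm_real, Real.norm_eq_abs,
        abs_of_nonneg (Real.sqrt_nonneg _), Complex.norm_real, Real.norm_eq_abs,
        abs_of_nonneg hU]
      have hA := norm_Atilde_le k n
      have step : 1 / Real.sqrt k * ‖Atilde k n‖ * Ufun (b / k)
          ≤ 1 / Real.sqrt k * (k:ℝ) * Ufun (b / k) := by
        refine mul_le_mul_of_nonneg_right (mul_le_mul_of_nonneg_left hA (by positivity)) hU
      refine step.trans (le_of_eq ?_)
      congr 1
      rw [one_div, inv_mul_eq_div, Real.div_sqrt]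
    · simp
  have hg_eq : ∀ k, g k = ∑' m, psi b N m k := by
    intro k
    simp only [hgdef]
    split_ifs with h
    · exact (hasSum_psi_point hb h (by omega)).tsum_eq.symm
    · simp only [psi, if_neg h, tsum_zero]
  have hpsi_nonneg : ∀ m k, 0 ≤ psi b N m k := fun m k => psi_nonneg hb.le N m k
  have hbound := fun m => psi_k_bound hb hN m
  have hBt := fun m => B_le_t hb hN m
  have ha : 0 < b / ((N:ℝ) + 1) := by positivity
  have ht1 := (hasSum_cosh_sub_one (b / ((N:ℝ) + 1))).mul_left (Real.sqrt ((N:ℝ) + 1))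
  have ht2 := (hasSum_sinh_aux ha.ne').mul_left ((2 * (N:ℝ) + 1) * Real.sqrt ((N:ℝ) + 1))
  have ht := ht1.add ht2
  have hsum_m : Summable (fun m => ∑' k, psi b N m k) :=
    Summable.of_nonneg_of_le (fun m => tsum_nonneg (fun k => hpsi_nonneg m k))
      (fun m => ((hbound m).2.trans (hBt m))) ht.summable
  have huncurry : Summable (Function.uncurry (fun m k => psi b N m k)) := by
    refine (summable_prod_of_nonneg ?_).2 ⟨fun m => (hbound m).1, hsum_m⟩
    intro p
    exact hpsi_nonneg p.1 p.2
  have hgsum : Summable g := by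
    have h2 : Summable (fun p : ℕ × ℕ => psi b N p.2 p.1) := huncurry.prod_symm
    exact h2.prod.congr fun k => (hg_eq k).symm
  have hfsum : Summable (fun k => ‖f k‖) :=
    Summable.of_nonneg_of_le (fun k => norm_nonneg _) hle hgsum
  refine ⟨hfsum, ?_⟩
  have h1 : ∑' k, ‖f k‖ ≤ ∑' k, g k := Summable.tsum_le_tsum hle hfsum hgsum
  have h2 : ∑' k, g k = ∑' m, ∑' k, psi b N m k :=
    (tsum_congr hg_eq).trans (Summable.tsum_comm huncurry)
  have h3 : ∑' m, ∑' k, psi b N m k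
      ≤ Real.sqrt ((N:ℝ) + 1) * (Real.cosh (b / ((N:ℝ) + 1)) - 1)
        + (2 * (N:ℝ) + 1) * Real.sqrt ((N:ℝ) + 1) *
          (Real.sinh (b / ((N:ℝ) + 1)) / (b / ((N:ℝ) + 1)) - 1) :=
    le_of_le_of_eq
      (Summable.tsum_le_tsum (fun m => (hbound m).2.trans (hBt m)) hsum_m ht.summable) ht.tsum_eq
  have habs : ‖(1 / (4 * (n:ℂ))) * ∑' k, f k‖
      ≤ 1 / (4 * (n:ℝ)) * ∑' k, ‖f k‖ := by
    rw [norm_mul]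
    have e0 : ‖(1 / (4 * (n:ℂ)))‖ = 1 / (4 * (n:ℝ)) := by
      rw [norm_div, norm_one,
        show (4 * (n:ℂ)) = (((4 * (n:ℝ)) : ℝ) : ℂ) by push_cast; ring,
        Complex.norm_real, Real.norm_eq_abs, abs_of_nonneg (by positivity)]
    rw [e0]
    refine mul_le_mul_of_nonneg_left ?_ (by positivity)
    exact norm_tsum_le_tsum_norm hfsum
  have hMeq : 1 / (4 * (n:ℝ)) *
      (Real.sqrt ((N:ℝ) + 1) * (Real.cosh (b / ((N:ℝ) + 1)) - 1)
        + (2 * (N:ℝ) + 1) * Real.sqrt ((N:ℝ) + 1) *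
          (Real.sinh (b / ((N:ℝ) + 1)) / (b / ((N:ℝ) + 1)) - 1)) = Mbound n N := by
    unfold Mbound
    rw [hbdef]
    have h32 : (((N:ℝ) + 1) / (n:ℝ)) ^ ((3:ℝ)/2)
        = (((N:ℝ) + 1) * Real.sqrt ((N:ℝ) + 1)) / ((n:ℝ) * Real.sqrt n) := by
      rw [Real.div_rpow (by positivity) hn0.le,
        show (3:ℝ)/2 = 1 + 1/2 by norm_num,
        Real.rpow_add hNR0, Real.rpow_add hn0, Real.rpow_one, Real.rpow_one,
        ← Real.sqrt_eq_rpow, ← Real.sqrt_eq_rpow]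
    rw [h32]
    have hπ : Real.pi ≠ 0 := Real.pi_ne_zero
    have hsn : Real.sqrt n ≠ 0 := by positivity
    have hNR : ((N:ℝ) + 1) ≠ 0 := hNR0.ne'
    have hnn : (n:ℝ) ≠ 0 := hn0.ne'
    field_simp
    ring
  calc ‖(1 / (4 * (n:ℂ))) * ∑' k, f k‖
      ≤ 1 / (4 * (n:ℝ)) * ∑' k, ‖f k‖ := habs
    _ ≤ 1 / (4 * (n:ℝ)) *
        (Real.sqrt ((N:ℝ) + 1) * (Real.cosh (b / ((N:ℝ) + 1)) - 1)
          + (2 * (N:ℝ) + 1) * Real.sqrt ((N:ℝ) + 1) *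
            (Real.sinh (b / ((N:ℝ) + 1)) / (b / ((N:ℝ) + 1)) - 1)) := by
        refine mul_le_mul_of_nonneg_left ?_ (by positivity)
        exact h1.trans (h2 ▸ h3)
    _ = Mbound n N := hMeq
end

section
/- Let k be an odd positive integer, let n be an integer, and let h be an integer with 0 ≤ h < k and gcd(h,k) = 1. Then the integer g_n(h,k) satisfies g_n(h,k) ≡ −6k·(h|k) + 3k·(1 + (−1|k)) (mod 8), where (·|k) denotes the Jacobi symbol. -/
/-- `g_n(h,k) = 24k s(h,k) - 12k s(2h,k) - 24nh` (a priori a rational number). -/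
def gfun (n h : ℤ) (k : ℕ) : ℚ :=
  24 * k * dedekindSum h k - 12 * k * dedekindSum (2 * h) k - 24 * n * h

open Finset


def epsZ (h : ℤ) (k : ℕ) (r : ℕ) : ℤ := if (k : ℤ) < 2 * ((h * r) % k) then 1 else 0

def muN (h : ℤ) (k : ℕ) : ℕ :=
  ((Finset.Icc 1 (k / 2)).filter (fun r : ℕ => (k : ℤ) < 2 * ((h * r) % k))).card

lemma eps_eq_div {k : ℕ} (hk : 0 < k) (hodd : Odd k) (h : ℤ) (r : ℕ) :
    epsZ h k r = (2 * h * r) / (k : ℤ) - 2 * ((h * r) / (k : ℤ)) := by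
  have hk0 : (k : ℤ) ≠ 0 := by exact_mod_cast hk.ne'
  have hkpos : (0 : ℤ) < k := by exact_mod_cast hk
  set q := (h * r) / (k : ℤ) with hq
  set s := (h * r) % (k : ℤ) with hs
  have hs0 : 0 ≤ s := Int.emod_nonneg _ hk0
  have hsk : s < k := Int.emod_lt_of_pos _ hkpos
  have hid : h * r = (k : ℤ) * q + s := by rw [hq, hs]; exact (Int.mul_ediv_add_emod _ _).symm
  have h2 : 2 * h * r = 2 * s + (k : ℤ) * (2 * q) := by linarith
  have hdiv : (2 * h * r) / (k : ℤ) = (2 * s) / (k : ℤ) + 2 * q := by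
    rw [h2, Int.add_mul_ediv_left _ _ hk0]
  have hne : 2 * s ≠ (k : ℤ) := by
    intro hcon
    obtain ⟨m, hm⟩ := hodd
    omega
  by_cases hc : (k : ℤ) < 2 * s
  · have h1 : (2 * s) / (k : ℤ) = 1 := by
      have : 2 * s = (2 * s - k) + (k : ℤ) * 1 := by ring
      rw [this, Int.add_mul_ediv_left _ _ hk0, Int.ediv_eq_zero_of_lt (by linarith) (by linarith)]
      ring
    simp only [epsZ, ← hs, if_pos hc]
    omega
  · have h1 : (2 * s) / (k : ℤ) = 0 :=
      Int.ediv_eq_zero_of_lt (by linarith) (by omega)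
    simp only [epsZ, ← hs, if_neg hc]
    omega

lemma two_sum_Icc (n : ℕ) : 2 * ∑ r ∈ Icc 1 n, r = n * (n + 1) := by
  induction n with
  | zero => simp
  | succ m ih => rw [Finset.sum_Icc_succ_top (by omega)]; nlinarith [ih]

/-- `g_n(h,k) = 24k s(h,k) - 12k s(2h,k) - 24nh` (a priori a rational number). -/
lemma gfun_eq {k : ℕ} (hk : 0 < k) (hodd : Odd k) (n h : ℤ) :
    gfun n h k =
      ((12 * (∑ r ∈ Icc 1 (k - 1), (r : ℤ) * epsZ h k r) - 3 * k * ((k : ℤ) - 1)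
        - 24 * n * h : ℤ) : ℚ) := by
  have hk0 : (k : ℚ) ≠ 0 := by exact_mod_cast hk.ne'
  unfold gfun dedekindSum
  rw [Finset.mul_sum, Finset.mul_sum, ← Finset.sum_sub_distrib]
  have key : ∀ r ∈ Icc 1 (k - 1),
      24 * (k : ℚ) * ((r : ℚ) / k * ((h : ℚ) * r / k - ⌊(h : ℚ) * r / k⌋ - 1 / 2))
      - 12 * (k : ℚ) * ((r : ℚ) / k * (((2*h : ℤ) : ℚ) * r / k - ⌊((2*h : ℤ) : ℚ) * r / k⌋ - 1/2))
      = ((12 * (r : ℤ) * epsZ h k r - 6 * r : ℤ) : ℚ) := by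
    intro r _
    have f1 : ⌊(h : ℚ) * r / k⌋ = (h * r) / (k : ℤ) := by
      rw [show (h : ℚ) * r = ((h * (r:ℕ) : ℤ) : ℚ) by push_cast; ring]
      exact Rat.floor_intCast_div_natCast _ _
    have f2 : ⌊((2*h : ℤ) : ℚ) * r / k⌋ = (2 * h * r) / (k : ℤ) := by
      rw [show ((2*h : ℤ) : ℚ) * r = ((2 * h * (r:ℕ) : ℤ) : ℚ) by push_cast; ring]
      exact Rat.floor_intCast_div_natCast _ _
    rw [f1, f2, eps_eq_div hk hodd]
    push_cast
    field_simp
    ring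
  rw [Finset.sum_congr rfl key]
  have hsum : ∑ r ∈ Icc 1 (k - 1), ((12 * (r : ℤ) * epsZ h k r - 6 * r : ℤ) : ℚ)
      = ((∑ r ∈ Icc 1 (k - 1), (12 * (r : ℤ) * epsZ h k r - 6 * r) : ℤ) : ℚ) := by
    push_cast; rfl
  rw [hsum, Finset.sum_sub_distrib]
  have h6 : ∑ r ∈ Icc 1 (k - 1), (6 * (r : ℤ)) = 3 * k * ((k : ℤ) - 1) := by
    have h2s := two_sum_Icc (k - 1)
    have hcast : (∑ r ∈ Icc 1 (k-1), (6 * (r:ℤ))) = 6 * (∑ r ∈ Icc 1 (k-1), (r : ℤ)) := by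
      rw [Finset.mul_sum]
    have e : 2 * (∑ r ∈ Icc 1 (k-1), (r : ℤ)) = ((k:ℤ) - 1) * ((k:ℤ) - 1 + 1) := by
      have := congrArg (Nat.cast : ℕ → ℤ) h2s
      push_cast [Nat.cast_sub hk] at this
      linarith
    rw [hcast]
    linear_combination 3 * e
  have h12 : ∑ r ∈ Icc 1 (k-1), 12 * (r:ℤ) * epsZ h k r
      = 12 * ∑ r ∈ Icc 1 (k-1), (r:ℤ) * epsZ h k r := by
    rw [Finset.mul_sum]; exact Finset.sum_congr rfl (fun x _ => by ring)
  rw [h12, h6]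
  push_cast
  ring


lemma emod_pos_of {k : ℕ} (hk : 0 < k) {h : ℤ} (hco : Int.gcd h k = 1) {r : ℕ}
    (hr1 : 1 ≤ r) (hrk : r < k) : 0 < (h * r) % (k : ℤ) := by
  have hk0 : (k : ℤ) ≠ 0 := by exact_mod_cast hk.ne'
  rcases (Int.emod_nonneg (h * r) hk0).lt_or_eq with h1 | h1
  · exact h1
  · exfalso
    have hdvd : (k : ℤ) ∣ h * r := Int.dvd_of_emod_eq_zero h1.symm
    have : (k : ℤ) ∣ (r : ℤ) :=
      Int.dvd_of_dvd_mul_right_of_gcd_one hdvd (by rwa [Int.gcd_comm])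
    have hkr : k ∣ r := by exact_mod_cast this
    have := Nat.le_of_dvd (by omega) hkr
    omega

lemma neg_emod_eq {k : ℕ} (hk : 0 < k) (x : ℤ) (hx : 0 < x % (k : ℤ)) :
    (-x) % (k : ℤ) = (k : ℤ) - x % (k : ℤ) := by
  have hkz : (0 : ℤ) < k := by exact_mod_cast hk
  have hid := Int.mul_ediv_add_emod x (k : ℤ)
  have hlt := Int.emod_lt_of_pos x hkz
  have h1 : -x = ((k : ℤ) - x % (k : ℤ)) + (k : ℤ) * (-(x / (k : ℤ)) - 1) := by linarith
  rw [h1, Int.add_mul_emod_self_left]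
  exact Int.emod_eq_of_lt (by linarith) (by linarith)

lemma ne_mul_of_coprime {a b : ℕ} (hab : Nat.Coprime a b) {r s : ℕ}
    (hr1 : 1 ≤ r) (hrb : r < b) : b * s ≠ a * r := by
  intro hcon
  have hd : b ∣ a * r := ⟨s, hcon.symm⟩
  have hbr : b ∣ r := (Nat.Coprime.dvd_of_dvd_mul_left (hab.symm) hd)
  have := Nat.le_of_dvd (by omega) hbr
  omega

lemma count_E2 {a b : ℕ} (ha : Odd a) (hb : Odd b) (hab : Nat.Coprime a b) :
    ((∑ r ∈ Icc 1 (b / 2), (a * r) / b) + ∑ s ∈ Icc 1 (a / 2), (b * s) / a)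
      = (b / 2) * (a / 2) := by
  have ha0 : 0 < a := ha.pos
  have hb0 : 0 < b := hb.pos
  have key : ∀ (a b : ℕ), Odd a → Odd b → Nat.Coprime a b →
      ∀ r ∈ Icc 1 (b / 2),
        (a * r) / b = ∑ s ∈ Icc 1 (a / 2), (if b * s < a * r then 1 else 0) := by
    intro a b ha hb hab r hr
    have ha0 : 0 < a := ha.pos
    have hb0 : 0 < b := hb.pos
    simp only [Finset.mem_Icc] at hr
    have hle : (a * r) / b ≤ a / 2 := by
      have hlt : (a * r) / b < a / 2 + 1 := by
        rw [Nat.div_lt_iff_lt_mul hb0]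
        obtain ⟨p, hp⟩ := ha
        obtain ⟨q, hq⟩ := hb
        have hrq : r ≤ q := by omega
        have ha2 : a / 2 = p := by omega
        rw [ha2]
        nlinarith
      omega
    have hfe : (Finset.Icc 1 (a / 2)).filter (fun s => b * s < a * r)
        = Finset.Icc 1 ((a * r) / b) := by
      ext s
      simp only [Finset.mem_filter, Finset.mem_Icc]
      constructor
      · rintro ⟨⟨hs1, _⟩, hlt2⟩
        exact ⟨hs1, by rw [Nat.le_div_iff_mul_le hb0, mul_comm]; omega⟩
      · rintro ⟨hs1, hs2⟩
        have hbs : s * b ≤ a * r := (Nat.le_div_iff_mul_le hb0).mp hs2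
        rw [mul_comm s b] at hbs
        have hne : b * s ≠ a * r := ne_mul_of_coprime hab hr.1 (by omega)
        exact ⟨⟨hs1, le_trans hs2 hle⟩, by omega⟩
    rw [Finset.sum_boole, hfe]
    simp [Nat.card_Icc]
  have k1 := key a b ha hb hab
  have k2 := key b a hb ha hab.symm
  rw [Finset.sum_congr rfl k1, Finset.sum_congr rfl k2, Finset.sum_comm,
    ← Finset.sum_add_distrib]
  have inner_eq : ∀ x ∈ Icc 1 (a / 2),
      ((∑ y ∈ Icc 1 (b / 2), (if b * x < a * y then 1 else 0))
        + ∑ y ∈ Icc 1 (b / 2), (if a * y < b * x then 1 else 0)) = b / 2 := by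
    intro x hx
    simp only [Finset.mem_Icc] at hx
    rw [← Finset.sum_add_distrib]
    have hone : ∀ y ∈ Icc 1 (b / 2),
        ((if b * x < a * y then 1 else 0) + (if a * y < b * x then 1 else 0)) = 1 := by
      intro y hy
      simp only [Finset.mem_Icc] at hy
      have ha2 : 2 * (a / 2) + 1 = a := by
        obtain ⟨q, hq⟩ := ha; omega
      have hne : a * y ≠ b * x := ne_mul_of_coprime hab.symm hx.1 (by omega)
      rcases lt_trichotomy (b * x) (a * y) with hlt | heq | hgt
      · rw [if_pos hlt, if_neg (by omega)]
      · exact absurd heq.symm hne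
      · rw [if_neg (by omega), if_pos hgt]
    rw [Finset.sum_congr rfl hone]
    simp [Nat.card_Icc]
  rw [Finset.sum_congr rfl inner_eq]
  simp [Nat.card_Icc, Nat.mul_comm]


lemma natOdd_cast_zmod2 {k : ℕ} (hk : Odd k) : ((k : ℕ) : ZMod 2) = 1 := by
  obtain ⟨m, rfl⟩ := hk
  push_cast
  rw [show ((2 : ZMod 2)) = 0 by decide]
  ring

lemma intOdd_cast_zmod2 {h : ℤ} (hh : Odd h) : ((h : ℤ) : ZMod 2) = 1 := by
  obtain ⟨m, rfl⟩ := hh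
  push_cast
  rw [show ((2 : ZMod 2)) = 0 by decide]
  ring

lemma E1 {k : ℕ} (hodd : Odd k) {h : ℤ} (hh : Odd h) (hco : Int.gcd h k = 1) :
    ((∑ r ∈ Icc 1 (k / 2), (h * r) / (k : ℤ) : ℤ) : ZMod 2) = (muN h k : ZMod 2) := by
  have hk : 0 < k := hodd.pos
  have hk0 : (k : ℤ) ≠ 0 := by exact_mod_cast hk.ne'
  have hkz : (0 : ℤ) < k := by exact_mod_cast hk
  have hkodd : k % 2 = 1 := Nat.odd_iff.mp hodd
  have c2 : (2 : ZMod 2) = 0 := by decide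
  have hgcd' : Int.gcd (k : ℤ) h = 1 := by rwa [Int.gcd_comm]
  have hbound : ∀ r : ℕ, 1 ≤ r → r ≤ k / 2 →
      0 < (h * r) % (k : ℤ) ∧ (h * r) % (k : ℤ) < k := fun r h1 h2 =>
    ⟨emod_pos_of hk hco h1 (by omega), Int.emod_lt_of_pos _ hkz⟩
  have step1 : h * (∑ r ∈ Icc 1 (k / 2), (r : ℤ))
      = k * (∑ r ∈ Icc 1 (k / 2), (h * r) / (k : ℤ))
        + ∑ r ∈ Icc 1 (k / 2), (h * r) % (k : ℤ) := by
    rw [Finset.mul_sum, Finset.mul_sum, ← Finset.sum_add_distrib]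
    exact Finset.sum_congr rfl fun r _ => (Int.mul_ediv_add_emod _ _).symm
  -- the "fold to [1, k/2]" bijection
  have step3 : (∑ r ∈ Icc 1 (k / 2), min ((h * r) % (k : ℤ)) ((k : ℤ) - (h * r) % (k : ℤ)))
      = ∑ r ∈ Icc 1 (k / 2), (r : ℤ) := by
    have hmem : ∀ (r : ℕ), r ∈ Icc 1 (k / 2) →
        (min ((h * r) % (k : ℤ)) ((k : ℤ) - (h * r) % (k : ℤ))).toNat ∈ Icc 1 (k / 2) := by
      intro r hr
      simp only [Finset.mem_Icc] at hr ⊢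
      obtain ⟨h1, h2⟩ := hbound r hr.1 hr.2
      rcases le_total ((h * r) % (k : ℤ)) ((k : ℤ) - (h * r) % (k : ℤ)) with hm | hm
      · rw [min_eq_left hm]; omega
      · rw [min_eq_right hm]; omega
    have hinj : ∀ (r1 r2 : ℕ), r1 ∈ Icc 1 (k / 2) → r2 ∈ Icc 1 (k / 2) →
        (min ((h * r1) % (k : ℤ)) ((k : ℤ) - (h * r1) % (k : ℤ))).toNat
          = (min ((h * r2) % (k : ℤ)) ((k : ℤ) - (h * r2) % (k : ℤ))).toNat → r1 = r2 := by
      intro r1 r2 hr1 hr2 heq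
      simp only [Finset.mem_Icc] at hr1 hr2
      obtain ⟨p1, q1⟩ := hbound r1 hr1.1 hr1.2
      obtain ⟨p2, q2⟩ := hbound r2 hr2.1 hr2.2
      have heq' : min ((h * r1) % (k : ℤ)) ((k : ℤ) - (h * r1) % (k : ℤ))
          = min ((h * r2) % (k : ℤ)) ((k : ℤ) - (h * r2) % (k : ℤ)) := by
        have := congrArg (Nat.cast : ℕ → ℤ) heq
        rwa [Int.toNat_of_nonneg (by omega), Int.toNat_of_nonneg (by omega)] at this
      have hcases : (h * r1) % (k : ℤ) = (h * r2) % (k : ℤ)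
          ∨ (h * r1) % (k : ℤ) + (h * r2) % (k : ℤ) = k := by
        rcases min_cases ((h * r1) % (k : ℤ)) ((k : ℤ) - (h * r1) % (k : ℤ)) with ⟨e1, _⟩ | ⟨e1, _⟩ <;>
          rcases min_cases ((h * r2) % (k : ℤ)) ((k : ℤ) - (h * r2) % (k : ℤ)) with ⟨e2, _⟩ | ⟨e2, _⟩ <;>
            rw [e1, e2] at heq' <;> omega
      rcases hcases with hA | hB
      · have hdvd : (k : ℤ) ∣ h * ((r1 : ℤ) - r2) := by
          have := Int.ModEq.dvd (show (h * (r1:ℕ) : ℤ) ≡ h * (r2:ℕ) [ZMOD (k : ℤ)] from hA)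
          have h2 : h * ((r1 : ℤ) - r2) = -(h * (r2:ℕ) - h * (r1:ℕ)) := by push_cast; ring
          rw [h2]
          exact dvd_neg.mpr this
        have hdr : (k : ℤ) ∣ ((r1 : ℤ) - r2) :=
          Int.dvd_of_dvd_mul_right_of_gcd_one hdvd hgcd'
        have : ((r1 : ℤ) - r2) = 0 :=
          Int.eq_zero_of_abs_lt_dvd hdr (by rw [abs_lt]; constructor <;> [omega; omega])
        omega
      · exfalso
        have hdvd : (k : ℤ) ∣ h * ((r1 : ℤ) + r2) := by
          have hmod : (h * (r1:ℕ) + h * (r2:ℕ)) % (k : ℤ) = 0 := by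
            rw [Int.add_emod, hB, Int.emod_self]
          have := Int.dvd_of_emod_eq_zero hmod
          have h2 : h * ((r1 : ℤ) + r2) = h * (r1:ℕ) + h * (r2:ℕ) := by push_cast; ring
          rwa [h2]
        have hdr : (k : ℤ) ∣ ((r1 : ℤ) + r2) :=
          Int.dvd_of_dvd_mul_right_of_gcd_one hdvd hgcd'
        have hle := Int.le_of_dvd (by omega) hdr
        omega
    apply Finset.sum_bij (i := fun (r : ℕ) (_ : r ∈ Icc 1 (k / 2)) =>
      (min ((h * r) % (k : ℤ)) ((k : ℤ) - (h * r) % (k : ℤ))).toNat) hmem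
      (fun a₁ ha₁ a₂ ha₂ => hinj a₁ a₂ ha₁ ha₂)
    · intro b hb
      obtain ⟨a, ha, e⟩ := Finset.surj_on_of_inj_on_of_card_le
        (fun (r : ℕ) (_ : r ∈ Icc 1 (k / 2)) =>
          (min ((h * r) % (k : ℤ)) ((k : ℤ) - (h * r) % (k : ℤ))).toNat)
        hmem hinj le_rfl b hb
      exact ⟨a, ha, e.symm⟩
    · intro r hr
      simp only [Finset.mem_Icc] at hr
      obtain ⟨h1, h2⟩ := hbound r hr.1 hr.2
      rw [Int.toNat_of_nonneg (by omega)]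
  -- step 2 : parity of sum of residues
  have step2 : ((∑ r ∈ Icc 1 (k / 2), (h * r) % (k : ℤ) : ℤ) : ZMod 2)
      = ((∑ r ∈ Icc 1 (k / 2), min ((h * r) % (k : ℤ)) ((k : ℤ) - (h * r) % (k : ℤ)) : ℤ) : ZMod 2)
        + (muN h k : ZMod 2) := by
    rw [muN, ← Finset.sum_boole]
    push_cast
    rw [← Finset.sum_add_distrib]
    apply Finset.sum_congr rfl
    intro r hr
    simp only [Finset.mem_Icc] at hr
    obtain ⟨h1, h2⟩ := hbound r hr.1 hr.2
    by_cases hc : (k : ℤ) < 2 * ((h * r) % (k : ℤ))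
    · rw [if_pos hc, min_eq_right (by omega)]
      push_cast
      rw [natOdd_cast_zmod2 hodd]
      linear_combination ((((h * r) % (k : ℤ) : ℤ) : ZMod 2) - 1) * c2
    · rw [if_neg hc, min_eq_left (by omega), add_zero]
  -- assemble
  have e1 : (∑ r ∈ Icc 1 (k / 2), ((r : ℤ) : ZMod 2))
      = ((∑ r ∈ Icc 1 (k / 2), (h * r) / (k : ℤ) : ℤ) : ZMod 2)
        + ((∑ r ∈ Icc 1 (k / 2), (h * r) % (k : ℤ) : ℤ) : ZMod 2) := by
    have := congrArg (fun z : ℤ => (z : ZMod 2)) step1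
    push_cast at this
    rw [intOdd_cast_zmod2 hh, natOdd_cast_zmod2 hodd] at this
    simp only [one_mul] at this
    push_cast
    exact this
  rw [step3] at step2
  push_cast
  push_cast at e1 step2
  rw [step2] at e1
  linear_combination -e1 - (muN h k : ZMod 2) * c2


lemma neg_one_pow_zmod2 {m n : ℕ} (h : (m : ZMod 2) = (n : ZMod 2)) :
    ((-1 : ℤ)) ^ m = (-1) ^ n := by
  have h2 : m % 2 = n % 2 := (ZMod.natCast_eq_natCast_iff m n 2).mp h
  rcases Nat.even_or_odd m with hm | hm
  · have hn : Even n := by rw [Nat.even_iff] at hm ⊢; omega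
    rw [hm.neg_one_pow, hn.neg_one_pow]
  · have hn : Odd n := by rw [Nat.odd_iff] at hm ⊢; omega
    rw [hm.neg_one_pow, hn.neg_one_pow]

lemma neg_one_pow_mod2 {m n : ℕ} (h : m % 2 = n % 2) :
    ((-1 : ℤ)) ^ m = (-1) ^ n := by
  apply neg_one_pow_zmod2
  exact (ZMod.natCast_eq_natCast_iff m n 2).mpr h

lemma gcd_emod_left' (h : ℤ) (k : ℕ) : Int.gcd (h % k) k = Int.gcd h k := by
  have hid : h = (k : ℤ) * (h / k) + h % k := (Int.mul_ediv_add_emod _ _).symm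
  apply Nat.dvd_antisymm
  · rw [← Int.natCast_dvd_natCast]
    apply Int.dvd_coe_gcd
    · calc (Int.gcd (h % k) k : ℤ) ∣ (k : ℤ) * (h / k) + h % k :=
          dvd_add (Dvd.dvd.mul_right (Int.gcd_dvd_right _ _) _) (Int.gcd_dvd_left _ _)
        _ = h := hid.symm
    · exact (Int.gcd_dvd_right _ _)
  · rw [← Int.natCast_dvd_natCast]
    apply Int.dvd_coe_gcd
    · have hsub : (Int.gcd h k : ℤ) ∣ h - (k : ℤ) * (h / k) :=
        dvd_sub (Int.gcd_dvd_left _ _) (Dvd.dvd.mul_right (Int.gcd_dvd_right _ _) _)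
      calc (Int.gcd h k : ℤ) ∣ h - (k : ℤ) * (h / k) := hsub
        _ = h % k := by omega
    · exact (Int.gcd_dvd_right _ _)

lemma mu_mod_left (h : ℤ) (k : ℕ) : muN (h % k) k = muN h k := by
  unfold muN
  congr 1
  apply Finset.filter_congr
  intro r _
  have : (h % k * r) % (k : ℤ) = (h * r) % (k : ℤ) := by
    rw [Int.mul_emod, Int.emod_emod_of_dvd _ dvd_rfl, ← Int.mul_emod]
  rw [this]

lemma mu_neg {k : ℕ} (hodd : Odd k) {h : ℤ} (hco : Int.gcd h k = 1) :
    muN (-h) k + muN h k = k / 2 := by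
  have hk : 0 < k := hodd.pos
  have hkodd : k % 2 = 1 := Nat.odd_iff.mp hodd
  have hiff : ∀ r ∈ Icc 1 (k / 2),
      ((k : ℤ) < 2 * ((-h * r) % k) ↔ ¬ ((k : ℤ) < 2 * ((h * r) % k))) := by
    intro r hr
    simp only [Finset.mem_Icc] at hr
    have hs := emod_pos_of hk hco hr.1 (show r < k by omega)
    have hlt : (h * r) % (k : ℤ) < k := Int.emod_lt_of_pos _ (by exact_mod_cast hk)
    have hne : 2 * ((h * r) % (k : ℤ)) ≠ k := by
      intro hcon; omega
    have : (-h * r) % (k : ℤ) = (k : ℤ) - (h * r) % k := by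
      rw [show -h * (r : ℤ) = -(h * r) by ring]
      exact neg_emod_eq hk _ hs
    rw [this]
    omega
  unfold muN
  rw [Finset.filter_congr hiff, add_comm,
    Finset.card_filter_add_card_filter_not]
  simp [Nat.card_Icc]

theorem gauss_jacobi (k : ℕ) (hodd : Odd k) (h : ℤ) (hco : Int.gcd h k = 1) :
    jacobiSym h k = (-1) ^ (muN h k) := by
  induction k using Nat.strong_induction_on generalizing h with
  | _ k IH =>
  have hk : 0 < k := hodd.pos
  have hkodd : k % 2 = 1 := Nat.odd_iff.mp hodd
  by_cases hk1 : k = 1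
  · subst hk1
    rw [jacobiSym.one_right]
    simp [muN]
  -- k ≥ 3
  have hk3 : 3 ≤ k := by omega
  -- the key case: h a natural number, odd, 0 < h < k, coprime
  have main_odd : ∀ a : ℕ, a < k → Odd a → Nat.Coprime a k →
      jacobiSym (a : ℤ) k = (-1) ^ (muN (a : ℤ) k) := by
    intro a halt haodd hacop
    have ha0 : 0 < a := haodd.pos
    by_cases ha1 : a = 1
    · subst ha1
      have hmu : muN (1 : ℤ) k = 0 := by
        unfold muN
        rw [Finset.card_eq_zero, Finset.filter_eq_empty_iff]
        intro r hr
        simp only [Finset.mem_Icc] at hr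
        have : ((1 : ℤ) * r) % (k : ℤ) = r := by
          rw [one_mul, Int.emod_eq_of_lt (by positivity) (by exact_mod_cast (by omega : r < k))]
        rw [this]
        push_cast
        omega
      push_cast
      rw [hmu]
      simpa using jacobiSym.one_left k
    -- a odd, 3 ≤ a < k
    have ha3 : 3 ≤ a := by
      rcases Nat.odd_iff.mp haodd with h2
      omega
    have haoddZ : Odd (a : ℤ) := by exact_mod_cast haodd
    have hkoddZ : Odd (k : ℤ) := by exact_mod_cast hodd
    have hco_ak : Int.gcd (a : ℤ) k = 1 := by
      rw [Int.gcd_natCast_natCast]; exact hacop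
    have hco_ka : Int.gcd (k : ℤ) a = 1 := by
      rw [Int.gcd_natCast_natCast]; exact hacop.symm
    have e1k := E1 hodd haoddZ hco_ak
    have e1a := E1 haodd hkoddZ hco_ka
    -- cast count_E2 to the ℤ-ediv sums
    have hcast1 : ((∑ r ∈ Icc 1 (k / 2), (a * r) / k : ℕ) : ℤ)
        = ∑ r ∈ Icc 1 (k / 2), ((a : ℤ) * r) / (k : ℤ) := by
      push_cast
      exact Finset.sum_congr rfl fun r _ => by push_cast; rfl
    have hcast2 : ((∑ s ∈ Icc 1 (a / 2), (k * s) / a : ℕ) : ℤ)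
        = ∑ s ∈ Icc 1 (a / 2), ((k : ℤ) * s) / (a : ℤ) := by
      push_cast
      exact Finset.sum_congr rfl fun r _ => by push_cast; rfl
    have e2 : ((∑ r ∈ Icc 1 (k / 2), ((a : ℤ) * r) / (k : ℤ) : ℤ) : ZMod 2)
        + ((∑ s ∈ Icc 1 (a / 2), ((k : ℤ) * s) / (a : ℤ) : ℤ) : ZMod 2)
        = ((k / 2 * (a / 2) : ℕ) : ZMod 2) := by
      have h0 := count_E2 haodd hodd hacop
      have h1 := congrArg (fun n : ℕ => ((n : ℤ) : ZMod 2)) h0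
      simp only [Nat.cast_add, Int.cast_add] at h1
      rw [hcast1, hcast2] at h1
      exact h1
    -- parity relation
    have hpar : ((muN (a : ℤ) k : ℕ) : ZMod 2)
        = ((a / 2 * (k / 2) + muN (k : ℤ) a : ℕ) : ZMod 2) := by
      have c2 : (2 : ZMod 2) = 0 := by decide
      push_cast at e2 e1k e1a ⊢
      rw [← e1k, ← e1a]
      linear_combination e2
        - (∑ x ∈ Icc 1 (a / 2), (((k : ℤ) * (x : ℕ) / (a : ℤ) : ℤ) : ZMod 2)) * c2
    -- reciprocity and IH
    have hrec := jacobiSym.quadratic_reciprocity haodd hodd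
    have hih := IH a halt haodd ((k : ℤ)) hco_ka
    rw [show ((a : ℕ) : ℤ) = (a : ℤ) by rfl] at hrec
    rw [hrec, hih, ← pow_add]
    exact (neg_one_pow_zmod2 hpar).symm
  -- now reduce the general h
  have h0co : Int.gcd (h % k) k = 1 := by rw [gcd_emod_left']; exact hco
  have hmodlt : h % k < k := Int.emod_lt_of_pos h (by exact_mod_cast hk)
  have hmodge : 0 ≤ h % k := Int.emod_nonneg h (by exact_mod_cast hk.ne')
  have hmodne : h % k ≠ 0 := by
    intro hcon
    rw [hcon] at h0co
    simp [Int.gcd] at h0co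
    omega
  set a : ℕ := (h % k).toNat with ha
  have haz : ((a : ℕ) : ℤ) = h % k := Int.toNat_of_nonneg hmodge
  have ha1 : 1 ≤ a := by omega
  have halt : a < k := by omega
  have hacop : Nat.Coprime a k := by
    have : Int.gcd (a : ℤ) k = 1 := by rw [haz]; exact h0co
    rwa [Int.gcd_natCast_natCast] at this
  have hJ : jacobiSym h k = jacobiSym (a : ℤ) k := by
    rw [jacobiSym.mod_left h k, haz]
  have hMu : muN h k = muN (a : ℤ) k := by rw [haz, mu_mod_left]
  rw [hJ, hMu]
  rcases Nat.even_or_odd a with haev | haodd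
  · -- a even: use k - a
    set b : ℕ := k - a with hb
    have hbodd : Odd b := by
      rw [Nat.odd_iff] at *
      rw [Nat.even_iff] at haev
      omega
    have hblt : b < k := by omega
    have hbz : ((b : ℕ) : ℤ) = (k : ℤ) - a := by
      push_cast [hb, Nat.cast_sub (le_of_lt halt)]; ring
    have hco_b : Int.gcd (b : ℤ) k = 1 := by
      rw [← gcd_emod_left' (b : ℤ) k]
      have : ((b : ℤ)) % k = (-(a : ℤ)) % k := by
        rw [hbz, show ((k : ℤ) - a) = -(a:ℤ) + (k:ℤ) * 1 by ring,
          Int.add_mul_emod_self_left]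
      rw [this, gcd_emod_left']
      have : Int.gcd (-(a : ℤ)) k = Int.gcd (a : ℤ) k := by
        simp [Int.gcd_def]
      rw [this, Int.gcd_natCast_natCast]
      exact hacop
    have hbcop : Nat.Coprime b k := by
      have := hco_b
      rwa [Int.gcd_natCast_natCast] at this
    -- (a : ℤ) ≡ -(b:ℤ) mod k
    have hb1 : 1 ≤ b := hbodd.pos
    have hab : ((a : ℤ)) % k = (-(b : ℤ)) % k := by
      have h2 : ((b : ℤ)) % k = b := Int.emod_eq_of_lt (by positivity) (by exact_mod_cast hblt)
      have h1 : (-(b : ℤ)) % k = (k : ℤ) - (b : ℤ) % k := by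
        apply neg_emod_eq hk
        rw [h2]
        exact_mod_cast hb1
      have h3 : ((a : ℤ)) % k = a := Int.emod_eq_of_lt (by positivity) (by exact_mod_cast halt)
      rw [h1, h2, h3, hbz]
      ring
    have hJab : jacobiSym (a : ℤ) k = jacobiSym (-(b : ℤ)) k := jacobiSym.mod_left' hab
    have hMuab : muN (a : ℤ) k = muN (-(b : ℤ)) k := by
      rw [← mu_mod_left (a : ℤ) k, ← mu_mod_left (-(b:ℤ)) k, hab]
    have hmb := mu_neg hodd hco_b
    have hmble : muN ((b : ℤ)) k ≤ k / 2 := by omega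
    rw [hJab, hMuab]
    rw [jacobiSym.neg _ hodd, main_odd b hblt hbodd hbcop,
      ZMod.χ₄_eq_neg_one_pow hkodd, ← pow_add]
    apply neg_one_pow_mod2
    omega
  · exact main_odd a halt haodd hacop


lemma eps_flip {k : ℕ} (hodd : Odd k) {h : ℤ} (hco : Int.gcd h k = 1) {r : ℕ}
    (hr1 : 1 ≤ r) (hrK : r ≤ k / 2) : epsZ h k (k - r) = 1 - epsZ h k r := by
  have hk : 0 < k := hodd.pos
  have hkodd : k % 2 = 1 := Nat.odd_iff.mp hodd
  have hrk : r < k := by omega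
  have hs := emod_pos_of hk hco hr1 hrk
  have hlt : (h * r) % (k : ℤ) < k := Int.emod_lt_of_pos _ (by exact_mod_cast hk)
  have hcast : ((k - r : ℕ) : ℤ) = (k : ℤ) - r := by
    push_cast [Nat.cast_sub (le_of_lt hrk)]; ring
  have hmod : (h * ((k - r : ℕ) : ℤ)) % (k : ℤ) = (k : ℤ) - (h * r) % (k : ℤ) := by
    rw [hcast, show h * ((k : ℤ) - r) = -(h * r) + (k : ℤ) * h by ring,
      Int.add_mul_emod_self_left, neg_emod_eq hk _ hs]
  unfold epsZ
  rw [hmod]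
  split_ifs <;> omega

lemma T_parity {k : ℕ} (hodd : Odd k) {h : ℤ} (hco : Int.gcd h k = 1) :
    ((∑ r ∈ Icc 1 (k - 1), (r : ℤ) * epsZ h k r : ℤ) : ZMod 2)
      = ((∑ r ∈ Icc 1 (k / 2), (r + 1) : ℕ) : ZMod 2) + (muN h k : ZMod 2) := by
  have hk : 0 < k := hodd.pos
  have hkodd : k % 2 = 1 := Nat.odd_iff.mp hodd
  set K := k / 2 with hK
  -- rewrite the full sum as a sum over Icc 1 K of paired terms
  have hsplit : (∑ r ∈ Icc 1 (k - 1), (r : ℤ) * epsZ h k r)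
      = ∑ r ∈ Icc 1 K, ((r : ℤ) * epsZ h k r + ((k - r : ℕ) : ℤ) * epsZ h k (k - r)) := by
    have h1 : Icc 1 (k - 1) = Ico 1 k := by
      ext x
      simp only [Finset.mem_Icc, Finset.mem_Ico]
      omega
    have h2 : (∑ r ∈ Ico 1 k, (r : ℤ) * epsZ h k r)
        = (∑ r ∈ Ico 1 (K + 1), (r : ℤ) * epsZ h k r)
          + ∑ r ∈ Ico (K + 1) k, (r : ℤ) * epsZ h k r :=
      (Finset.sum_Ico_consecutive _ (by omega) (by omega)).symm
    have h3 : Ico 1 (K + 1) = Icc 1 K := by rw [Finset.Ico_add_one_right_eq_Icc]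
    have h4 : (∑ r ∈ Ico (K + 1) k, (r : ℤ) * epsZ h k r)
        = ∑ r ∈ Icc 1 K, ((k - r : ℕ) : ℤ) * epsZ h k (k - r) := by
      apply Finset.sum_nbij' (i := fun r => k - r) (j := fun r => k - r)
      · intro a ha
        simp only [Finset.mem_Ico] at ha
        simp only [Finset.mem_Icc]
        omega
      · intro a ha
        simp only [Finset.mem_Icc] at ha
        simp only [Finset.mem_Ico]
        omega
      · intro a ha
        simp only [Finset.mem_Ico] at ha
        omega
      · intro a ha
        simp only [Finset.mem_Icc] at ha
        omega
      · intro a ha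
        simp only [Finset.mem_Ico] at ha
        rw [show k - (k - a) = a by omega]
    rw [h1, h2, h3, h4, ← Finset.sum_add_distrib]
  rw [hsplit]
  -- express muN as an integer sum
  have hmu : ((muN h k : ℕ) : ℤ)
      = ∑ r ∈ Icc 1 K, (if (k : ℤ) < 2 * ((h * r) % k) then (1 : ℤ) else 0) := by
    rw [muN, Finset.sum_boole]
  -- divisibility of the difference
  have hdvd : (2 : ℤ) ∣ (∑ r ∈ Icc 1 K, ((r : ℤ) * epsZ h k r + ((k - r : ℕ) : ℤ) * epsZ h k (k - r)))
      - ((∑ r ∈ Icc 1 K, ((r : ℤ) + 1)) + ((muN h k : ℕ) : ℤ)) := by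
    rw [hmu, ← Finset.sum_add_distrib, ← Finset.sum_sub_distrib]
    apply Finset.dvd_sum
    intro r hr
    simp only [Finset.mem_Icc] at hr
    rw [eps_flip hodd hco hr.1 hr.2]
    have hcast : ((k - r : ℕ) : ℤ) = (k : ℤ) - r := by
      push_cast [Nat.cast_sub (by omega : r ≤ k)]; ring
    rw [hcast]
    unfold epsZ
    split_ifs <;> [skip; skip] <;> push_cast <;> ring_nf <;> omega
  -- conclude in ZMod 2
  have h0 : ((((∑ r ∈ Icc 1 K, ((r : ℤ) * epsZ h k r + ((k - r : ℕ) : ℤ) * epsZ h k (k - r)))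
      - ((∑ r ∈ Icc 1 K, ((r : ℤ) + 1)) + ((muN h k : ℕ) : ℤ)) : ℤ)) : ZMod 2) = 0 :=
    (ZMod.intCast_zmod_eq_zero_iff_dvd _ 2).mpr hdvd
  push_cast at h0 ⊢
  linear_combination h0

/-- `g_n(h,k)` is an integer congruent to `-6k (h|k) + 3k (1 + (-1|k))` modulo `8`,
where `(·|k)` denotes the Jacobi symbol. -/
theorem gfun_mod_eight (k : ℕ) (hk : 0 < k) (hodd : Odd k) (n h : ℤ)
    (h0 : 0 ≤ h) (hlt : h < k) (hco : Int.gcd h k = 1) :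
    ∃ m : ℤ, gfun n h k = (m : ℚ) ∧
      m ≡ -6 * k * jacobiSym h k + 3 * k * (1 + jacobiSym (-1) k) [ZMOD 8] := by
  have hkodd : k % 2 = 1 := Nat.odd_iff.mp hodd
  set K := k / 2 with hKdef
  set T := ∑ r ∈ Icc 1 (k - 1), (r : ℤ) * epsZ h k r with hTdef
  set c := ∑ r ∈ Icc 1 K, (r + 1) with hcdef
  set P := (K : ℤ) * ((K : ℤ) + 1) with hPdef
  refine ⟨12 * T - 3 * (k : ℤ) * ((k : ℤ) - 1) - 24 * n * h, gfun_eq hk hodd n h, ?_⟩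
  -- parity of T
  have hT := T_parity hodd hco
  rw [← hTdef, ← hKdef, ← hcdef] at hT
  have ht2 : (2 : ℤ) ∣ T - ((c : ℤ) + (muN h k : ℤ)) := by
    apply (ZMod.intCast_zmod_eq_zero_iff_dvd _ 2).mp
    push_cast
    linear_combination hT
  -- value of c
  have hcN : 2 * c = K * (K + 1) + 2 * K := by
    have h1 : c = (∑ r ∈ Icc 1 K, r) + K := by
      rw [hcdef, Finset.sum_add_distrib]
      simp [Nat.card_Icc]
    have h2 := two_sum_Icc K
    omega
  have hc2Z : 2 * (c : ℤ) = P + 2 * (K : ℤ) := by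
    have := congrArg (Nat.cast : ℕ → ℤ) hcN
    push_cast at this
    rw [hPdef]
    linarith
  have hkK : (k : ℤ) = 2 * (K : ℤ) + 1 := by
    have : 2 * K + 1 = k := by omega
    omega
  -- P mod 4
  have hPmod : P % 4 = ((K : ℤ) % 4 * ((K : ℤ) % 4 + 1)) % 4 := by
    have h1 : (K : ℤ) ≡ (K : ℤ) % 4 [ZMOD 4] := (Int.emod_emod_of_dvd _ dvd_rfl).symm
    exact h1.mul (h1.add_right 1)
  -- jacobi values
  have hJ := gauss_jacobi k hodd h hco
  have hJval : jacobiSym h k = 1 ∧ (muN h k) % 2 = 0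
      ∨ jacobiSym h k = -1 ∧ (muN h k) % 2 = 1 := by
    rcases Nat.even_or_odd (muN h k) with he | he
    · left; exact ⟨by rw [hJ, he.neg_one_pow], Nat.even_iff.mp he⟩
    · right; exact ⟨by rw [hJ, he.neg_one_pow], Nat.odd_iff.mp he⟩
  have hχ : jacobiSym (-1) k = (-1 : ℤ) ^ K := by
    rw [jacobiSym.at_neg_one hodd, ZMod.χ₄_eq_neg_one_pow hkodd]
  have hχval : jacobiSym (-1) k = 1 ∧ K % 2 = 0
      ∨ jacobiSym (-1) k = -1 ∧ K % 2 = 1 := by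
    rcases Nat.even_or_odd K with he | he
    · left; exact ⟨by rw [hχ, he.neg_one_pow], Nat.even_iff.mp he⟩
    · right; exact ⟨by rw [hχ, he.neg_one_pow], Nat.odd_iff.mp he⟩
  show (12 * T - 3 * (k : ℤ) * ((k : ℤ) - 1) - 24 * n * h) % 8
      = (-6 * (k : ℤ) * jacobiSym h k + 3 * (k : ℤ) * (1 + jacobiSym (-1) k)) % 8
  have hQ : 3 * (k : ℤ) * ((k : ℤ) - 1) = 12 * P - 6 * (K : ℤ) := by
    rw [hPdef, hkK]; ring
  rw [hQ]
  set W := n * h with hWdef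
  have hW : (24 : ℤ) * n * h = 24 * W := by rw [hWdef]; ring
  rw [hW]
  rcases (by omega : (K : ℤ) % 4 = 0 ∨ (K : ℤ) % 4 = 1 ∨ (K : ℤ) % 4 = 2 ∨ (K : ℤ) % 4 = 3)
      with hB | hB | hB | hB <;>
    rw [hB] at hPmod <;>
    norm_num at hPmod <;>
    rcases hJval with ⟨hJ1, hμ⟩ | ⟨hJ1, hμ⟩ <;>
    rcases hχval with ⟨hχ1, hKp⟩ | ⟨hχ1, hKp⟩ <;>
    rw [hJ1, hχ1] <;>
    omega
end

section
/- Let k be an odd positive integer, let n be an integer, and let h be an integer with 0 ≤ h < k and gcd(h,k) = 1. Then the integer g_n(h,k) satisfies g_n(h,k) ≡ 24·t_n(h) (mod 3k), where t_n(h) is any integer with t_n(h) ≡ −nh + (16h)^{−1} (mod k), with (16h)^{−1} an inverse of 16h modulo k. -/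
lemma aux_gauss (n : ℕ) : (∑ r ∈ Finset.Ico 1 n, (r : ℤ)) * 2 = (n:ℤ) * ((n:ℤ) - 1) := by
  induction n with
  | zero => simp
  | succ m ih =>
    rcases Nat.eq_zero_or_pos m with rfl | hm
    · simp
    · rw [Finset.sum_Ico_succ_top (by omega)]
      push_cast
      push_cast at ih
      linear_combination ih

lemma aux_term (k : ℕ) (hk : 0 < k) (h : ℤ) (r : ℕ) :
    24 * (k:ℚ) * (((r:ℚ)/k) * ((h : ℚ) * r / k - ⌊(h : ℚ) * r / k⌋ - 1 / 2))
      - 12 * (k:ℚ) * (((r:ℚ)/k) * (((2*h : ℤ) : ℚ) * r / k - ⌊((2*h : ℤ) : ℚ) * r / k⌋ - 1 / 2))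
    = (if (k:ℤ) ≤ 2 * ((h * r) % k) then (12:ℚ) * r else 0) - 6 * r := by
  have hk0 : (k:ℚ) ≠ 0 := by positivity
  have e1 : (h : ℚ) * r = ((h * r : ℤ) : ℚ) := by push_cast; ring
  have e2 : ((2*h : ℤ) : ℚ) * r = ((2 * h * r : ℤ) : ℚ) := by push_cast; ring
  rw [e1, e2, Rat.floor_intCast_div_natCast, Rat.floor_intCast_div_natCast]
  set q : ℤ := h * r / k with hq
  set f : ℤ := h * r % k with hf
  set q2 : ℤ := 2 * h * r / k with hq2
  set f2 : ℤ := 2 * h * r % k with hf2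
  have hd1 : (k:ℤ) * q + f = h * r := Int.mul_ediv_add_emod _ _
  have hd2 : (k:ℤ) * q2 + f2 = 2 * h * r := Int.mul_ediv_add_emod _ _
  have hkz : (0:ℤ) < k := by exact_mod_cast hk
  have hf0 : 0 ≤ f := Int.emod_nonneg _ (by omega)
  have hfk : f < k := Int.emod_lt_of_pos _ hkz
  have hf20 : 0 ≤ f2 := Int.emod_nonneg _ (by omega)
  have hf2k : f2 < k := Int.emod_lt_of_pos _ hkz
  have hrel : f2 = 2 * f + (k:ℤ) * (2 * q - q2) := by linarith [hd1, hd2]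
  have hd01 : 2 * q - q2 = 0 ∨ 2 * q - q2 = -1 := by
    set d : ℤ := 2 * q - q2 with hdd
    have hdle : d ≤ 0 := by nlinarith
    have hdge : -1 ≤ d := by nlinarith
    omega
  have hQ1 : ((h * r : ℤ) : ℚ) = k * q + f := by exact_mod_cast (hd1.symm)
  have hQ2 : ((2 * h * r : ℤ) : ℚ) = k * q2 + f2 := by exact_mod_cast (hd2.symm)
  rw [hQ1, hQ2]
  rcases hd01 with hd | hd
  · have hq2v : q2 = 2 * q := by omega
    have hfv : f2 = 2 * f := by rw [hrel, hd]; ring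
    have hc : ¬ ((k:ℤ) ≤ 2 * f) := by omega
    rw [if_neg hc, hq2v]
    have : (f2 : ℚ) = 2 * f := by exact_mod_cast hfv
    rw [this]; push_cast; field_simp; ring
  · have hq2v : q2 = 2 * q + 1 := by omega
    have hfv : f2 = 2 * f - k := by rw [hrel, hd]; ring
    have hc : (k:ℤ) ≤ 2 * f := by omega
    rw [if_pos hc, hq2v]
    have : (f2 : ℚ) = 2 * f - k := by exact_mod_cast hfv
    rw [this]; push_cast; field_simp; ring



/-- `g_n(h,k) ≡ 24 t (mod 3k)` for every integer `t` with
`16h·t ≡ -16nh² + 1 (mod k)`, i.e. `t ≡ -nh + (16h)⁻¹ (mod k)`. -/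
theorem gfun_mod_three_k (k : ℕ) (hk : 0 < k) (hodd : Odd k) (n h : ℤ)
    (h0 : 0 ≤ h) (hlt : h < k) (hco : Int.gcd h k = 1)
    (t : ℤ) (ht : 16 * h * t ≡ -16 * n * h ^ 2 + 1 [ZMOD (k : ℤ)]) :
    ∃ m : ℤ, gfun n h k = (m : ℚ) ∧ m ≡ 24 * t [ZMOD (3 * (k : ℤ))] := by
  have hkz : (0:ℤ) < (k:ℤ) := by exact_mod_cast hk
  have hIcc : Finset.Icc 1 (k-1) = Finset.Ico 1 k := by
    rw [← Finset.Ico_add_one_right_eq_Icc]; congr 1; omega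
  obtain ⟨j, hj⟩ := hodd
  set T : ℤ := ∑ r ∈ Finset.Ico 1 k,
      (if (k:ℤ) ≤ 2 * ((h * (r:ℤ)) % (k:ℤ)) then (r:ℤ) else 0) with hT
  refine ⟨12 * T - 3 * (k:ℤ) * ((k:ℤ) - 1) - 24 * n * h, ?_, ?_⟩
  · -- the equality
    have key : 24 * (k:ℚ) * dedekindSum h k - 12 * (k:ℚ) * dedekindSum (2*h) k
        = 12 * (T:ℚ) - 3 * (k:ℚ) * ((k:ℚ) - 1) := by
      unfold dedekindSum
      rw [hIcc, Finset.mul_sum, Finset.mul_sum, ← Finset.sum_sub_distrib,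
        Finset.sum_congr rfl (fun r _ => aux_term k hk h r), Finset.sum_sub_distrib]
      have h12 : ∑ r ∈ Finset.Ico 1 k,
          (if (k:ℤ) ≤ 2 * ((h * (r:ℤ)) % (k:ℤ)) then (12:ℚ) * r else 0) = 12 * (T:ℚ) := by
        rw [hT, Int.cast_sum, Finset.mul_sum]
        exact Finset.sum_congr rfl fun r _ => by split_ifs <;> simp
      have hg : (∑ r ∈ Finset.Ico 1 k, (r:ℚ)) * 2 = (k:ℚ) * ((k:ℚ) - 1) := by
        have h'' : (((∑ r ∈ Finset.Ico 1 k, (r:ℤ)) * 2 : ℤ) : ℚ)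
            = (((k:ℤ) * ((k:ℤ) - 1) : ℤ) : ℚ) := by rw [aux_gauss k]
        push_cast at h''
        exact h''
      rw [h12, ← Finset.mul_sum]
      linear_combination (-3 : ℚ) * hg
    unfold gfun
    rw [key]
    push_cast
    ring
  · -- the congruence
    have hcop' : IsCoprime h (k:ℤ) := Int.isCoprime_iff_gcd_eq_one.mpr hco
    obtain ⟨u, v, huv⟩ := hcop'
    have hkj : (k:ℤ) = 2 * (j:ℤ) + 1 := by omega
    -- h * T = explicit sum
    have h1 : h * T = ∑ r ∈ Finset.Ico 1 k,
        (if (k:ℤ) ≤ 2 * ((h * (r:ℤ)) % (k:ℤ)) then h * (r:ℤ) else 0) := by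
      rw [hT, Finset.mul_sum]
      exact Finset.sum_congr rfl fun r _ => by split_ifs <;> simp
    have h2 : (∑ r ∈ Finset.Ico 1 k,
          (if (k:ℤ) ≤ 2 * ((h * (r:ℤ)) % (k:ℤ)) then h * (r:ℤ) else 0))
        ≡ (∑ r ∈ Finset.Ico 1 k,
          (if (k:ℤ) ≤ 2 * ((h * (r:ℤ)) % (k:ℤ)) then (h * (r:ℤ)) % (k:ℤ) else 0))
        [ZMOD (k:ℤ)] := by
      rw [Int.modEq_iff_dvd, ← Finset.sum_sub_distrib]
      apply Finset.dvd_sum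
      intro r _
      split_ifs
      · exact ⟨-(h * (r:ℤ) / (k:ℤ)), by linear_combination Int.mul_ediv_add_emod (h * (r:ℤ)) (k:ℤ)⟩
      · simp
    -- reindexing bijection
    have hmem : ∀ (c : ℤ), IsCoprime (k:ℤ) c → ∀ r ∈ Finset.Ico 1 k,
        ((c * (r:ℤ)) % (k:ℤ)).toNat ∈ Finset.Ico 1 k := by
      intro c hc r hr
      simp only [Finset.mem_Ico] at hr ⊢
      have h0' : 0 ≤ (c * (r:ℤ)) % (k:ℤ) := Int.emod_nonneg _ (by omega)
      have h1' : (c * (r:ℤ)) % (k:ℤ) < k := Int.emod_lt_of_pos _ hkz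
      have hne : (c * (r:ℤ)) % (k:ℤ) ≠ 0 := by
        intro hz
        have hdk : (k:ℤ) ∣ c * (r:ℤ) := Int.dvd_of_emod_eq_zero hz
        have hdr : (k:ℤ) ∣ (r:ℤ) := hc.dvd_of_dvd_mul_left hdk
        have hrpos : (0:ℤ) < (r:ℤ) := by exact_mod_cast hr.1
        have := Int.le_of_dvd hrpos hdr
        have : (r:ℤ) < k := by exact_mod_cast hr.2
        omega
      omega
    have hinv : ∀ (c d : ℤ), ((k:ℤ) ∣ c * d - 1) → ∀ r ∈ Finset.Ico 1 k,
        ((d * ((c * (r:ℤ)) % (k:ℤ))) % (k:ℤ)).toNat = r := by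
      intro c d hcd r hr
      simp only [Finset.mem_Ico] at hr
      obtain ⟨w, hw⟩ := hcd
      have e1 : d * ((c * (r:ℤ)) % (k:ℤ)) ≡ d * (c * (r:ℤ)) [ZMOD (k:ℤ)] :=
        Int.ModEq.mul_left d (Int.emod_emod_of_dvd _ dvd_rfl)
      have e2 : d * (c * (r:ℤ)) ≡ (r:ℤ) [ZMOD (k:ℤ)] :=
        Int.modEq_iff_dvd.mpr ⟨-(r:ℤ) * w, by linear_combination (-(r:ℤ)) * hw⟩
      have e3 : (d * ((c * (r:ℤ)) % (k:ℤ))) % (k:ℤ) = (r:ℤ) % (k:ℤ) := e1.trans e2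
      have e4 : (r:ℤ) % (k:ℤ) = (r:ℤ) := by
        apply Int.emod_eq_of_lt (by positivity)
        exact_mod_cast hr.2
      rw [e3, e4]
      exact Int.toNat_natCast r
    have hcopKh : IsCoprime (k:ℤ) h := (Int.isCoprime_iff_gcd_eq_one.mpr hco).symm
    have hcopKu : IsCoprime (k:ℤ) u := ⟨v, h, by linear_combination huv⟩
    have h3 : (∑ r ∈ Finset.Ico 1 k,
          (if (k:ℤ) ≤ 2 * ((h * (r:ℤ)) % (k:ℤ)) then (h * (r:ℤ)) % (k:ℤ) else 0))
        = ∑ s ∈ Finset.Ico 1 k, (if (k:ℤ) ≤ 2 * (s:ℤ) then (s:ℤ) else 0) := by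
      refine Finset.sum_nbij' (i := fun r => ((h * (r:ℤ)) % (k:ℤ)).toNat)
        (j := fun s => ((u * (s:ℤ)) % (k:ℤ)).toNat)
        (fun r hr => hmem h hcopKh r hr) (fun s hs => hmem u hcopKu s hs)
        ?_ ?_ ?_
      · intro r hr
        have hnn : 0 ≤ (h * (r:ℤ)) % (k:ℤ) := Int.emod_nonneg _ (by omega)
        simp only [Int.toNat_of_nonneg hnn]
        exact hinv h u ⟨-v, by linear_combination huv⟩ r hr
      · intro s hs
        have hnn : 0 ≤ (u * (s:ℤ)) % (k:ℤ) := Int.emod_nonneg _ (by omega)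
        simp only [Int.toNat_of_nonneg hnn]
        exact hinv u h ⟨-v, by linear_combination huv⟩ s hs
      · intro r hr
        have hnn : 0 ≤ (h * (r:ℤ)) % (k:ℤ) := Int.emod_nonneg _ (by omega)
        simp only [Int.toNat_of_nonneg hnn]
    -- the Gauss value of the right-hand sum
    have hW8 : 8 * (∑ s ∈ Finset.Ico 1 k, (if (k:ℤ) ≤ 2 * (s:ℤ) then (s:ℤ) else 0)) - 1
        = (k:ℤ) * (6 * (j:ℤ) - 1) := by
      have hcond : ∀ s ∈ Finset.Ico 1 k,
          (if (k:ℤ) ≤ 2 * (s:ℤ) then (s:ℤ) else 0) = (if j + 1 ≤ s then (s:ℤ) else 0) := by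
        intro s _
        split_ifs <;> omega
      rw [Finset.sum_congr rfl hcond, ← Finset.sum_filter, Finset.Ico_filter_le,
        max_eq_right (by omega : 1 ≤ j + 1)]
      have hsplit := Finset.sum_Ico_consecutive (fun s : ℕ => (s:ℤ))
        (by omega : 1 ≤ j + 1) (by omega : j + 1 ≤ k)
      have g1 := aux_gauss k
      have g2 := aux_gauss (j + 1)
      push_cast at g1 g2 hsplit
      rw [hkj] at g1 ⊢
      linear_combination 4 * g1 - 4 * g2 + 8 * hsplit
    -- congruence h*T ≡ W
    have hWT : h * T ≡ (∑ s ∈ Finset.Ico 1 k, (if (k:ℤ) ≤ 2 * (s:ℤ) then (s:ℤ) else 0))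
        [ZMOD (k:ℤ)] := by
      rw [h1, ← h3]; exact h2
    have hdvd1 : (k:ℤ) ∣ 8 * (h * T) - 1 := by
      obtain ⟨a, ha⟩ := Int.ModEq.dvd hWT
      exact ⟨6 * (j:ℤ) - 1 - 8 * a, by linear_combination hW8 - 8 * ha⟩
    have hdvd2 : (k:ℤ) ∣ (-16 * n * h ^ 2 + 1) - 16 * h * t := Int.ModEq.dvd ht
    have hX : (k:ℤ) ∣ (4 * T - 8 * n * h - 8 * t) * (2 * h) := by
      obtain ⟨a, ha⟩ := hdvd1
      obtain ⟨b, hb⟩ := hdvd2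
      exact ⟨a + b, by linear_combination ha + hb⟩
    have hcopK2 : IsCoprime (k:ℤ) 2 := ⟨1, -(j:ℤ), by rw [hkj]; ring⟩
    have hcop2h : IsCoprime (k:ℤ) (2 * h) := hcopK2.mul_right hcopKh
    have hXdvd : (k:ℤ) ∣ 4 * T - 8 * n * h - 8 * t := hcop2h.dvd_of_dvd_mul_right hX
    rw [Int.modEq_iff_dvd]
    obtain ⟨c, hc⟩ := hXdvd
    exact ⟨(k:ℤ) - 1 - c, by linear_combination (-3 : ℤ) * hc⟩
end
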